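/- Let G^{[Σ]} ⊆ I^{[Σ]} and H ⊆ Syz(I^{[Σ]}) satisfy: (1) every g^{[β]} ∈ G^{[Σ]} has g ≠ 0; (2) G^{[Σ]} is complete and H is sig-complete; (3) every module term σ ∈ T(Σ) of the form coefficient times u a ε_i b is reducible by H ∪ {β : g^{[β]} ∈ G^{[Σ]}}; (4) every regular ambiguity of elements of G^{[Σ]} is covered by (G^{[Σ]}, H). Then G^{[Σ]} is a signature Gröbner basis of I^{[Σ]} and H is a syzygy basis of I^{[Σ]}. -/

import Mathlib

/-!  Signature Gröbner bases in the mixed algebra `R[x₁,…,x_k]⟨y₁,…,y_n⟩`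
over a principal ideal domain `R`, following Hofstadler–Verron. -/

open Finsupp

/-- A mixed monomial `v·w`, with `v` a commutative monomial in `x₁,…,x_k`
(recorded by its exponent vector) and `w` a word in the noncommutative
variables `y₁,…,y_n`. -/
@[ext]
structure MMon (k n : ℕ) where
  c : Fin k →₀ ℕ
  w : FreeMonoid (Fin n)

namespace MMon

instance (k n : ℕ) : One (MMon k n) := ⟨⟨0, 1⟩⟩
noncomputable instance (k n : ℕ) : Mul (MMon k n) := ⟨fun a b => ⟨a.c + b.c, a.w * b.w⟩⟩

@[simp] lemma mul_c {k n : ℕ} (a b : MMon k n) : (a * b).c = a.c + b.c := rfl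
@[simp] lemma mul_w {k n : ℕ} (a b : MMon k n) : (a * b).w = a.w * b.w := rfl
@[simp] lemma one_c {k n : ℕ} : (1 : MMon k n).c = 0 := rfl
@[simp] lemma one_w {k n : ℕ} : (1 : MMon k n).w = 1 := rfl

noncomputable instance (k n : ℕ) : Monoid (MMon k n) where
  mul_assoc a b c := by ext : 1 <;> simp [add_assoc, mul_assoc]
  one_mul a := by ext : 1 <;> simp
  mul_one a := by ext : 1 <;> simp

end MMon

/-- A module monomial `u·a·ε_i·b` of the free bimodule `Σ = (A ⊗_{R[X]} A)^r`. -/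
@[ext]
structure ModMon (k n r : ℕ) where
  u : Fin k →₀ ℕ
  a : FreeMonoid (Fin n)
  i : Fin r
  b : FreeMonoid (Fin n)

instance {k n r : ℕ} [NeZero r] : Inhabited (ModMon k n r) := ⟨⟨0, 1, default, 1⟩⟩

/-- The mixed algebra `A = R[x₁,…,x_k]⟨y₁,…,y_n⟩`, realised as the monoid
algebra of the monoid of mixed monomials. -/
abbrev MixedAlg (R : Type) [CommRing R] (k n : ℕ) : Type := MonoidAlgebra R (MMon k n)

/-- The free `A`-bimodule `Σ = (A ⊗_{R[X]} A)^r`, realised as the free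
`R`-module on the module monomials `u·a·ε_i·b`. -/
abbrev SigModule (R : Type) [CommRing R] (k n r : ℕ) : Type := ModMon k n r →₀ R

section Defs

variable {R : Type} [CommRing R] {k n r : ℕ}

/-- The term `c·m` of `A` (an element of `T(A)` when `c ≠ 0`). -/
noncomputable def trm (m : MMon k n) (c : R) : MixedAlg R k n := MonoidAlgebra.single m c

/-- The word `b ∈ ⟨Y⟩`, viewed as an element of `A`. -/
noncomputable def wrd (b : FreeMonoid (Fin n)) : MixedAlg R k n :=
  MonoidAlgebra.single ⟨0, b⟩ 1

/-- Multiplication `m·σ` of a module monomial by a mixed monomial on the left. -/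
noncomputable def mulL (m : MMon k n) (σ : ModMon k n r) : ModMon k n r :=
  ⟨m.c + σ.u, m.w * σ.a, σ.i, σ.b⟩

/-- Multiplication `σ·m` of a module monomial by a mixed monomial on the right. -/
noncomputable def mulR (σ : ModMon k n r) (m : MMon k n) : ModMon k n r :=
  ⟨σ.u + m.c, σ.a, σ.i, σ.b * m.w⟩

/-- The two-sided multiple `m·σ·b` of a module monomial by a mixed monomial `m`
on the left and a word `b` on the right. -/
noncomputable def mulLR (m : MMon k n) (σ : ModMon k n r) (b : FreeMonoid (Fin n)) : ModMon k n r :=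
  ⟨m.c + σ.u, m.w * σ.a, σ.i, σ.b * b⟩

/-- The left action of `A` on the bimodule `Σ`. -/
noncomputable def actL (f : MixedAlg R k n) (α : SigModule R k n r) : SigModule R k n r :=
  Finsupp.sum f.coeff fun m cm => Finsupp.sum α fun σ cσ => Finsupp.single (mulL m σ) (cm * cσ)

/-- The right action of `A` on the bimodule `Σ`. -/
noncomputable def actR (α : SigModule R k n r) (f : MixedAlg R k n) : SigModule R k n r :=
  Finsupp.sum f.coeff fun m cm => Finsupp.sum α fun σ cσ => Finsupp.single (mulR σ m) (cσ * cm)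

/-- The two-sided multiple `t·α·b` of `α ∈ Σ` by the term `t = c·m` on the left
and the word `b` on the right. -/
noncomputable def scaleLR (m : MMon k n) (c : R) (α : SigModule R k n r)
    (b : FreeMonoid (Fin n)) : SigModule R k n r :=
  Finsupp.sum α fun σ cσ => Finsupp.single (mulLR m σ b) (c * cσ)

/-- The `A`-bimodule homomorphism `Σ → A`, `α ↦ ᾱ`, sending `ε_i` to `f_i`
(where `F i = f_i` are the generators). -/
noncomputable def barMap (F : Fin r → MixedAlg R k n) (α : SigModule R k n r) :
    MixedAlg R k n :=
  Finsupp.sum α fun σ cσ =>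
    trm ⟨σ.u, σ.a⟩ cσ * F σ.i * wrd σ.b

/-- The basis vector `ε_i` of `Σ`. -/
noncomputable def epsMod (i : Fin r) : SigModule R k n r :=
  Finsupp.single ⟨0, 1, i, 1⟩ 1

/-- The labeled module `I^{[Σ]}`: pairs `f^{[α]}` with `ᾱ = f`. -/
def Labeled (F : Fin r → MixedAlg R k n) (p : MixedAlg R k n × SigModule R k n r) : Prop :=
  barMap F p.2 = p.1

/-- A syzygy of `I^{[Σ]}`: an element `α ∈ Σ` with `ᾱ = 0`. -/
def IsSyzygy (F : Fin r → MixedAlg R k n) (γ : SigModule R k n r) : Prop :=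
  barMap F γ = 0

section Orders

variable [LinearOrder (MMon k n)] [LinearOrder (ModMon k n r)]

/-- The leading monomial of `f ∈ A` (with `LM 0 = ⊥`). -/
noncomputable def LMb (f : MixedAlg R k n) : WithBot (MMon k n) := f.coeff.support.max

/-- The leading monomial of `f ∈ A` (defaulting to `1` for `f = 0`). -/
noncomputable def LMd (f : MixedAlg R k n) : MMon k n := (f.coeff.support.max).unbotD 1

/-- The leading coefficient of `f ∈ A` (`0` for `f = 0`). -/
noncomputable def LC (f : MixedAlg R k n) : R := f.coeff (LMd f)

/-- The leading term of `f ∈ A`, as an element of `A` (`0` for `f = 0`). -/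
noncomputable def LTerm (f : MixedAlg R k n) : MixedAlg R k n := trm (LMd f) (LC f)

/-- The signature monomial of `α ∈ Σ` (with `⊥` for `α = 0`): the `⪯`-largest
monomial of the support of `α`. -/
noncomputable def sigb (α : SigModule R k n r) : WithBot (ModMon k n r) := α.support.max

variable [NeZero r]

/-- The signature monomial of `α ∈ Σ`, defaulting for `α = 0`. -/
noncomputable def sigMd (α : SigModule R k n r) : ModMon k n r :=
  (α.support.max).unbotD default

/-- The coefficient of the signature of `α`. -/
noncomputable def sigC (α : SigModule R k n r) : R := α (sigMd α)

/-- The signature `sig(α)` of `α ∈ Σ`, as a term, i.e. a single-term element of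
`Σ` (`0` for `α = 0`).  Equality `sig α = sig β` of signatures as *terms* is
`sigT α = sigT β`; the relation `sig α ≃ sig β` is `sigb α = sigb β`; the
relation `sig α ≺ sig β` is `sigb α < sigb β`. -/
noncomputable def sigT (α : SigModule R k n r) : SigModule R k n r :=
  Finsupp.single (sigMd α) (sigC α)

end Orders

/-- The compatibility requirements on the chosen monomial ordering on `M(A)`
and module ordering on `M(Σ)`: both are compatible with multiplication,
both are well-orderings, and they are compatible with each other. -/
structure IsOrderSetting (k n r : ℕ) [LinearOrder (MMon k n)]
    [LinearOrder (ModMon k n r)] : Prop where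
  mon_wf : WellFounded ((· < ·) : MMon k n → MMon k n → Prop)
  mod_wf : WellFounded ((· < ·) : ModMon k n r → ModMon k n r → Prop)
  mon_mul : ∀ a b m m' : MMon k n, m ≤ m' → a * m * b ≤ a * m' * b
  mod_mul : ∀ (m : MMon k n) (b : FreeMonoid (Fin n)) (σ τ : ModMon k n r),
      σ ≤ τ → mulLR m σ b ≤ mulLR m τ b
  compat₁ : ∀ (u v : Fin k →₀ ℕ) (a b : FreeMonoid (Fin n)) (i : Fin r),
      (⟨u, a⟩ : MMon k n) < ⟨v, b⟩ ↔ (⟨u, a, i, 1⟩ : ModMon k n r) < ⟨v, b, i, 1⟩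
  compat₂ : ∀ (u v : Fin k →₀ ℕ) (a b : FreeMonoid (Fin n)) (i : Fin r),
      (⟨u, a⟩ : MMon k n) < ⟨v, b⟩ ↔ (⟨u, 1, i, a⟩ : ModMon k n r) < ⟨v, 1, i, b⟩

end Defs

/-! ### Ambiguities -/

/-- `WordAmb a b c d p q` says that `(a ⊗ b, c ⊗ d, p, q)` is an ambiguity
(overlap, inclusion or external) of the words `p` and `q`. -/
inductive WordAmb {n : ℕ} :
    FreeMonoid (Fin n) → FreeMonoid (Fin n) → FreeMonoid (Fin n) → FreeMonoid (Fin n) →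
    FreeMonoid (Fin n) → FreeMonoid (Fin n) → Prop
  | overlap₁ (a b p q : FreeMonoid (Fin n)) (h : a * p = q * b)
      (ha : a ≠ 1) (hb : b ≠ 1) (hla : a.length < q.length) (hlb : b.length < p.length) :
      WordAmb a 1 1 b p q
  | overlap₂ (a b p q : FreeMonoid (Fin n)) (h : p * a = b * q)
      (ha : a ≠ 1) (hb : b ≠ 1) (hla : a.length < q.length) (hlb : b.length < p.length) :
      WordAmb 1 a b 1 p q
  | inclusion₁ (a b p q : FreeMonoid (Fin n)) (h : p = a * q * b) :
      WordAmb 1 1 a b p q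
  | inclusion₂ (a b p q : FreeMonoid (Fin n)) (h : a * p * b = q) :
      WordAmb a b 1 1 p q
  | external₁ (m p q : FreeMonoid (Fin n)) :
      WordAmb 1 (m * q) (p * m) 1 p q
  | external₂ (m p q : FreeMonoid (Fin n)) :
      WordAmb (q * m) 1 1 (m * p) p q

section Amb

variable {R : Type} [CommRing R] {k n r : ℕ}
variable [LinearOrder (MMon k n)] [LinearOrder (ModMon k n r)]

/-- `IsAmb f g m₁ n₁ m₂ n₂` says that `(m₁ ⊗ n₁, m₂ ⊗ n₂)` is an ambiguity of the
(nonzero) polynomials `f` and `g`: an ambiguity of the word parts of their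
leading monomials, with left cofactors completed by `lcm(u,v)/u` resp.
`lcm(u,v)/v` on the commutative parts. -/
def IsAmb (f g : MixedAlg R k n) (m₁ : MMon k n) (n₁ : FreeMonoid (Fin n))
    (m₂ : MMon k n) (n₂ : FreeMonoid (Fin n)) : Prop :=
  ∃ a b c d : FreeMonoid (Fin n),
    WordAmb a b c d (LMd f).w (LMd g).w ∧
    m₁ = ⟨((LMd f).c ⊔ (LMd g).c) - (LMd f).c, a⟩ ∧ n₁ = b ∧
    m₂ = ⟨((LMd f).c ⊔ (LMd g).c) - (LMd g).c, c⟩ ∧ n₂ = d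

/-- The leading monomial `LM(a) = LM(m₁ f n₁) = LM(m₂ g n₂)` of an ambiguity. -/
noncomputable def ambLM (f : MixedAlg R k n) (m₁ : MMon k n) (n₁ : FreeMonoid (Fin n)) :
    MMon k n :=
  m₁ * LMd f * ⟨0, n₁⟩

variable [IsDomain R] [GCDMonoid R]

/-- The cofactor `lcmlc(f,g)/LC(f)`. -/
noncomputable def cofL (f g : MixedAlg R k n) : R :=
  Classical.choose (dvd_lcm_left (LC f) (LC g))

/-- The cofactor `lcmlc(f,g)/LC(g)`. -/
noncomputable def cofR (f g : MixedAlg R k n) : R :=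
  Classical.choose (dvd_lcm_right (LC f) (LC g))

variable [NeZero r]

/-- The signature `SIG(a) = max(sig(c_f m₁ α n₁), −sig(c_g m₂ β n₂))` (first in
case of tie) of an ambiguity `a = (m₁ ⊗ n₁, m₂ ⊗ n₂)` of `f^{[α]]`, `g^{[β]}`,
as a term (single-term element) of `Σ`. -/
noncomputable def ambSIG (f g : MixedAlg R k n) (α β : SigModule R k n r)
    (m₁ : MMon k n) (n₁ : FreeMonoid (Fin n)) (m₂ : MMon k n) (n₂ : FreeMonoid (Fin n)) :
    SigModule R k n r :=
  if sigb (scaleLR m₂ (cofR f g) β n₂) ≤ sigb (scaleLR m₁ (cofL f g) α n₁) then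
    sigT (scaleLR m₁ (cofL f g) α n₁)
  else
    - sigT (scaleLR m₂ (cofR f g) β n₂)

/-- An ambiguity is regular if `sig(m₁ α n₁) ≄ sig(m₂ β n₂)`. -/
def RegAmb (α β : SigModule R k n r) (m₁ : MMon k n) (n₁ : FreeMonoid (Fin n))
    (m₂ : MMon k n) (n₂ : FreeMonoid (Fin n)) : Prop :=
  sigb (scaleLR m₁ (1 : R) α n₁) ≠ sigb (scaleLR m₂ (1 : R) β n₂)

/-- An ambiguity is singular if `sig(c_f m₁ α n₁) = sig(c_g m₂ β n₂)`. -/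
def SingAmb (f g : MixedAlg R k n) (α β : SigModule R k n r) (m₁ : MMon k n)
    (n₁ : FreeMonoid (Fin n)) (m₂ : MMon k n) (n₂ : FreeMonoid (Fin n)) : Prop :=
  sigT (scaleLR m₁ (cofL f g) α n₁) = sigT (scaleLR m₂ (cofR f g) β n₂)

/-- The polynomial part of the S-polynomial of an ambiguity. -/
noncomputable def SPolP (f g : MixedAlg R k n) (m₁ : MMon k n) (n₁ : FreeMonoid (Fin n))
    (m₂ : MMon k n) (n₂ : FreeMonoid (Fin n)) : MixedAlg R k n :=
  trm m₁ (cofL f g) * f * wrd n₁ - trm m₂ (cofR f g) * g * wrd n₂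

/-- The module part of the S-polynomial of an ambiguity. -/
noncomputable def SPolM (f g : MixedAlg R k n) (α β : SigModule R k n r) (m₁ : MMon k n)
    (n₁ : FreeMonoid (Fin n)) (m₂ : MMon k n) (n₂ : FreeMonoid (Fin n)) :
    SigModule R k n r :=
  scaleLR m₁ (cofL f g) α n₁ - scaleLR m₂ (cofR f g) β n₂

/-- The polynomial part of the G-polynomial of an ambiguity, w.r.t. Bézout
coefficients `c`, `d`. -/
noncomputable def GPolP (c d : R) (f g : MixedAlg R k n) (m₁ : MMon k n)
    (n₁ : FreeMonoid (Fin n)) (m₂ : MMon k n) (n₂ : FreeMonoid (Fin n)) : MixedAlg R k n :=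
  trm m₁ c * f * wrd n₁ + trm m₂ d * g * wrd n₂

/-- The module part of the G-polynomial of an ambiguity, w.r.t. Bézout
coefficients `c`, `d`. -/
noncomputable def GPolM (c d : R) (α β : SigModule R k n r) (m₁ : MMon k n)
    (n₁ : FreeMonoid (Fin n)) (m₂ : MMon k n) (n₂ : FreeMonoid (Fin n)) :
    SigModule R k n r :=
  scaleLR m₁ c α n₁ + scaleLR m₂ d β n₂

/-- `BezoutFor c d f g`: `c, d` are Bézout coefficients for `LC f`, `LC g`. -/
def BezoutFor (c d : R) (f g : MixedAlg R k n) : Prop :=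
  c * LC f + d * LC g = gcd (LC f) (LC g)

end Amb

/-! ### Reductions, bases, cover -/

section Red

variable {R : Type} [CommRing R] {k n r : ℕ}
variable [LinearOrder (MMon k n)] [LinearOrder (ModMon k n r)]

/-- `f^{[α]}` is (top) sig-reducible by `G`: there are `g^{[β]} ∈ G`, a term
`t = c·m` and a word `b` with `LT(t g b) = LT(f) > LT(f - t g b)` and
`sig(t β b) ⪯ sig(α)`. -/
def SigReducible (G : Set (MixedAlg R k n × SigModule R k n r))
    (f : MixedAlg R k n) (α : SigModule R k n r) : Prop :=
  ∃ g β, (g, β) ∈ G ∧ ∃ (m : MMon k n) (c : R) (b : FreeMonoid (Fin n)), c ≠ 0 ∧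
    LTerm (trm m c * g * wrd b) = LTerm f ∧
    LMb (f - trm m c * g * wrd b) < LMb f ∧
    sigb (scaleLR m c β b) ≤ sigb α

/-- `f^{[α]}` is regular sig-reducible by `G`. -/
def RegSigReducible (G : Set (MixedAlg R k n × SigModule R k n r))
    (f : MixedAlg R k n) (α : SigModule R k n r) : Prop :=
  ∃ g β, (g, β) ∈ G ∧ ∃ (m : MMon k n) (c : R) (b : FreeMonoid (Fin n)), c ≠ 0 ∧
    LTerm (trm m c * g * wrd b) = LTerm f ∧
    LMb (f - trm m c * g * wrd b) < LMb f ∧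
    sigb (scaleLR m c β b) < sigb α

/-- `f^{[α]}` is super reducible by `G`: there are `g^{[β]} ∈ G`, a term `t` and
a word `b` with `sig(α) = sig(t β b)` (as terms) and `LM(f) = LM(t g b)`. -/
def SuperReducible [NeZero r] (G : Set (MixedAlg R k n × SigModule R k n r))
    (f : MixedAlg R k n) (α : SigModule R k n r) : Prop :=
  ∃ g β, (g, β) ∈ G ∧ ∃ (m : MMon k n) (c : R) (b : FreeMonoid (Fin n)), c ≠ 0 ∧
    sigT α = sigT (scaleLR m c β b) ∧
    LMb f = LMb (trm m c * g * wrd b)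

/-- `α ∈ Σ` is (top) reducible by the set `H ⊆ Σ`: `sig(α) = sig(t γ b)` for
some `γ ∈ H`, term `t` and word `b`. -/
def ModReducible [NeZero r] (H : Set (SigModule R k n r)) (α : SigModule R k n r) : Prop :=
  ∃ γ ∈ H, ∃ (m : MMon k n) (c : R) (b : FreeMonoid (Fin n)), c ≠ 0 ∧
    sigT α = sigT (scaleLR m c γ b)

/-- `G` is a (strong) signature Gröbner basis of `I^{[Σ]}`. -/
def IsSigGB (F : Fin r → MixedAlg R k n) (G : Set (MixedAlg R k n × SigModule R k n r)) :
    Prop :=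
  ∀ f α, barMap F α = f → f ≠ 0 → SigReducible G f α

/-- `G` is a signature Gröbner basis of `I^{[Σ]}` up to (module monomial)
signature `σ`. -/
def IsSigGBUpTo (F : Fin r → MixedAlg R k n)
    (G : Set (MixedAlg R k n × SigModule R k n r)) (σ : WithBot (ModMon k n r)) : Prop :=
  ∀ f α, barMap F α = f → f ≠ 0 → sigb α < σ → SigReducible G f α

/-- `H` is a syzygy basis of `I^{[Σ]}`. -/
def IsSyzBasis [NeZero r] (F : Fin r → MixedAlg R k n) (H : Set (SigModule R k n r)) :
    Prop :=
  ∀ γ, IsSyzygy F γ → γ ≠ 0 → ModReducible H γ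

variable [IsDomain R] [GCDMonoid R] [NeZero r]

/-- `G` is complete: the G-polynomials (w.r.t. non-singular Bézout coefficients)
of all ambiguities of `G` are sig-reducible by `G`. -/
def CompleteSet (G : Set (MixedAlg R k n × SigModule R k n r)) : Prop :=
  ∀ g₁ β₁ g₂ β₂, (g₁, β₁) ∈ G → (g₂, β₂) ∈ G →
    ∀ m₁ n₁ m₂ n₂, IsAmb g₁ g₂ m₁ n₁ m₂ n₂ →
      ∀ c d, BezoutFor c d g₁ g₂ →
        sigb (GPolM c d β₁ β₂ m₁ n₁ m₂ n₂) = sigb (ambSIG g₁ g₂ β₁ β₂ m₁ n₁ m₂ n₂) →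
        SigReducible G (GPolP c d g₁ g₂ m₁ n₁ m₂ n₂) (GPolM c d β₁ β₂ m₁ n₁ m₂ n₂)

/-- `MonLcm σ₁ σ₂ τ`: the least common multiple `lcm(σ₁,σ₂)` of the module
monomials `σ₁ = u₁a₁ε_jb₁`, `σ₂ = u₂a₂ε_jb₂` is defined and equals `τ`. -/
def MonLcm (σ₁ σ₂ τ : ModMon k n r) : Prop :=
  σ₁.i = σ₂.i ∧ τ.i = σ₁.i ∧ τ.u = σ₁.u ⊔ σ₂.u ∧
  ((τ.a = σ₁.a ∧ ∃ s, σ₁.a = s * σ₂.a) ∨ (τ.a = σ₂.a ∧ ∃ s, σ₂.a = s * σ₁.a)) ∧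
  ((τ.b = σ₁.b ∧ ∃ s, σ₁.b = σ₂.b * s) ∨ (τ.b = σ₂.b ∧ ∃ s, σ₂.b = σ₁.b * s))

/-- `H` is sig-complete: all sig-Combinations of elements of `H` are reducible
by `H`. -/
def SigCompleteSet (H : Set (SigModule R k n r)) : Prop :=
  ∀ γ₁ ∈ H, ∀ γ₂ ∈ H, ∀ τ, MonLcm (sigMd γ₁) (sigMd γ₂) τ →
    ∀ (m₁ : MMon k n) (b₁ : FreeMonoid (Fin n)) (m₂ : MMon k n) (b₂ : FreeMonoid (Fin n)),
      mulLR m₁ (sigMd γ₁) b₁ = τ → mulLR m₂ (sigMd γ₂) b₂ = τ →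
      ∀ c d : R, c * sigC γ₁ + d * sigC γ₂ = gcd (sigC γ₁) (sigC γ₂) →
        ModReducible H (scaleLR m₁ c γ₁ b₁ + scaleLR m₂ d γ₂ b₂)

/-- The ambiguity `a` (of `g₁^{[β₁]}`, `g₂^{[β₂]}`), with signature `SIG(a)` and
leading monomial `LM(a)`, is covered by `(G, H)`: there are `g^{[β]} ∈ G`,
`γ ∈ H`, terms `t, t'` (possibly `0`) and words `b, b'` with
`SIG(a) = sig(t β b) + sig(t' γ b')` and `LM(t g b) < LM(a)`. -/
def CoveredBy (G : Set (MixedAlg R k n × SigModule R k n r))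
    (H : Set (SigModule R k n r)) (Sig : SigModule R k n r) (Lm : MMon k n) : Prop :=
  ∃ g β, (g, β) ∈ G ∧ ∃ γ ∈ H,
    ∃ (m : MMon k n) (c : R) (b : FreeMonoid (Fin n))
      (m' : MMon k n) (c' : R) (b' : FreeMonoid (Fin n)),
      Sig = sigT (scaleLR m c β b) + sigT (scaleLR m' c' γ b') ∧
      LMb (trm m c * g * wrd b) < (Lm : WithBot (MMon k n))

end Red



open Finsupp

section TopLemmas

variable {M : Type*} [LinearOrder M] {R : Type} [CommRing R]

lemma supp_max_ne_bot_iff {v : M →₀ R} : v.support.max ≠ ⊥ ↔ v ≠ 0 := by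
  rw [Ne, Finset.max_eq_bot, Finsupp.support_eq_empty]

lemma max_coe_unbot' {v : M →₀ R} (hv : v ≠ 0) (d : M) :
    ((v.support.max.unbotD d : M) : WithBot M) = v.support.max := by
  obtain ⟨x, hx⟩ := Finset.max_of_nonempty (Finsupp.support_nonempty_iff.2 hv)
  rw [hx]; rfl

lemma topd_mem {v : M →₀ R} (hv : v ≠ 0) (d : M) : v.support.max.unbotD d ∈ v.support :=
  Finset.mem_of_max (max_coe_unbot' hv d).symm

lemma topd_coeff_ne {v : M →₀ R} (hv : v ≠ 0) (d : M) : v (v.support.max.unbotD d) ≠ 0 :=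
  Finsupp.mem_support_iff.1 (topd_mem hv d)

lemma supp_le_of_max_le {v : M →₀ R} {τ : M} (h : v.support.max ≤ (τ : WithBot M)) {x : M}
    (hx : x ∈ v.support) : x ≤ τ := by
  exact_mod_cast le_trans (Finset.le_max hx) h

lemma max_eq_of_bound {v : M →₀ R} {τ : M} (hb : ∀ x ∈ v.support, x ≤ τ) (hτ : v τ ≠ 0) :
    v.support.max = (τ : WithBot M) :=
  le_antisymm (Finset.max_le fun x hx => WithBot.coe_le_coe.2 (hb x hx))
    (Finset.le_max (Finsupp.mem_support_iff.2 hτ))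

lemma topd_eq_of_bound {v : M →₀ R} {τ : M} (hb : ∀ x ∈ v.support, x ≤ τ) (hτ : v τ ≠ 0)
    (d : M) : v.support.max.unbotD d = τ := by
  rw [max_eq_of_bound hb hτ]; rfl

lemma max_sub_lt {v w : M →₀ R} {τ : M} (hv : v.support.max ≤ (τ : WithBot M))
    (hw : w.support.max ≤ (τ : WithBot M)) (h : v τ = w τ) :
    (v - w).support.max < (τ : WithBot M) := by
  rcases eq_or_ne (v - w) 0 with h0 | h0
  · rw [h0]; simpa using WithBot.bot_lt_coe τ
  obtain ⟨x, hx⟩ := Finset.max_of_nonempty (Finsupp.support_nonempty_iff.2 h0)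
  rw [hx, WithBot.coe_lt_coe]
  have hxm : x ∈ (v - w).support := Finset.mem_of_max hx
  have hxne : x ≠ τ := by
    intro he; subst he
    simp only [Finsupp.mem_support_iff, Finsupp.sub_apply, h, sub_self, ne_eq,
      not_true_eq_false] at hxm
  have hle : x ≤ τ := by
    have := Finsupp.support_sub (f := v) (g := w) hxm
    rcases Finset.mem_union.1 this with h' | h'
    · exact supp_le_of_max_le hv h'
    · exact supp_le_of_max_le hw h'
  exact lt_of_le_of_ne hle hxne

lemma max_add_le {v w : M →₀ R} {τ : WithBot M} (hv : v.support.max ≤ τ)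
    (hw : w.support.max ≤ τ) : (v + w).support.max ≤ τ := by
  apply Finset.max_le
  intro x hx
  rcases Finset.mem_union.1 (Finsupp.support_add hx) with h' | h'
  · exact le_trans (Finset.le_max h') hv
  · exact le_trans (Finset.le_max h') hw

lemma max_sub_le {v w : M →₀ R} {τ : WithBot M} (hv : v.support.max ≤ τ)
    (hw : w.support.max ≤ τ) : (v - w).support.max ≤ τ := by
  apply Finset.max_le
  intro x hx
  rcases Finset.mem_union.1 (Finsupp.support_sub hx) with h' | h'
  · exact le_trans (Finset.le_max h') hv
  · exact le_trans (Finset.le_max h') hw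

lemma finset_max_image_mono {M' : Type*} [LinearOrder M'] {φ : M → M'} (hmono : Monotone φ)
    (s : Finset M) : (s.image φ).max = s.max.map φ := by
  rcases s.eq_empty_or_nonempty with rfl | hs
  · simp
  obtain ⟨a, ha⟩ := Finset.max_of_nonempty hs
  rw [ha]
  show _ = ((φ a : M') : WithBot M')
  apply le_antisymm
  · apply Finset.max_le
    intro x hx
    obtain ⟨y, hy, rfl⟩ := Finset.mem_image.1 hx
    have : (y : WithBot M) ≤ (a : WithBot M) := ha ▸ Finset.le_max hy
    exact WithBot.coe_le_coe.2 (hmono (by exact_mod_cast this))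
  · exact Finset.le_max (Finset.mem_image_of_mem φ (Finset.mem_of_max ha))

lemma mapDomain_max {M' : Type*} [LinearOrder M'] {φ : M → M'} (hmono : Monotone φ)
    (hinj : Function.Injective φ) (v : M →₀ R) :
    (Finsupp.mapDomain φ v).support.max = v.support.max.map φ := by
  classical
  rw [Finsupp.mapDomain_support_of_injective hinj, finset_max_image_mono hmono]

end TopLemmas

open Finsupp

section AlgLemmas

variable {R : Type} [CommRing R] {k n r : ℕ}

/-! ### monoid facts -/

lemma MMon.mk_mul (u v : Fin k →₀ ℕ) (a b : FreeMonoid (Fin n)) :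
    (⟨u, a⟩ : MMon k n) * ⟨v, b⟩ = ⟨u + v, a * b⟩ := rfl

lemma wrd_mk (b : FreeMonoid (Fin n)) : (wrd b : MixedAlg R k n) = trm ⟨0, b⟩ 1 := rfl

lemma mmon_mul_inj (m : MMon k n) (w : FreeMonoid (Fin n)) :
    Function.Injective (fun x : MMon k n => m * x * ⟨0, w⟩) := by
  intro x y hxy
  simp only [MMon.ext_iff, MMon.mul_c, MMon.mul_w, add_zero] at hxy
  exact MMon.ext (add_left_cancel hxy.1) (mul_left_cancel (mul_right_cancel hxy.2))

lemma mulLR_inj (m : MMon k n) (b : FreeMonoid (Fin n)) :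
    Function.Injective (fun σ : ModMon k n r => mulLR m σ b) := by
  intro x y hxy
  simp only [ModMon.ext_iff, mulLR] at hxy
  obtain ⟨h1, h2, h3, h4⟩ := hxy
  exact ModMon.ext (add_left_cancel h1) (mul_left_cancel h2) h3 (mul_right_cancel h4)

@[simp] lemma mulLR_comp (m m' : MMon k n) (σ : ModMon k n r) (b b' : FreeMonoid (Fin n)) :
    mulLR m' (mulLR m σ b) b' = mulLR (m' * m) σ (b * b') := by
  simp [mulLR, add_assoc, mul_assoc]

@[simp] lemma mulLR_one (σ : ModMon k n r) : mulLR 1 σ 1 = σ := by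
  exact ModMon.ext (zero_add _) (one_mul _) rfl (mul_one _)

/-! ### mapDomain normal forms -/

lemma trm_mul_trm (m m' : MMon k n) (c c' : R) :
    (trm m c * trm m' c' : MixedAlg R k n) = trm (m * m') (c * c') :=
  MonoidAlgebra.single_mul_single ..

lemma tgb_eq (m : MMon k n) (c : R) (g : MixedAlg R k n) (b : FreeMonoid (Fin n)) :
    (trm m c * g * wrd b).coeff = Finsupp.mapDomain (fun x => m * x * ⟨0, b⟩) (c • g.coeff) := by
  induction g using MonoidAlgebra.induction_linear with
  | zero => simp [Finsupp.mapDomain_zero]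
  | add f g hf hg =>
      rw [mul_add, add_mul, MonoidAlgebra.coeff_add, hf, hg, MonoidAlgebra.coeff_add, smul_add,
        Finsupp.mapDomain_add]
  | single a v =>
      show (trm m c * trm a v * trm ⟨0, b⟩ 1).coeff = Finsupp.mapDomain _ (c • Finsupp.single a v)
      rw [trm_mul_trm, trm_mul_trm, mul_one, smul_single, Finsupp.mapDomain_single, smul_eq_mul]
      rfl

lemma scaleLR_eq (m : MMon k n) (c : R) (α : SigModule R k n r) (b : FreeMonoid (Fin n)) :
    scaleLR m c α b = Finsupp.mapDomain (fun σ => mulLR m σ b) (c • α) := by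
  induction α using Finsupp.induction_linear with
  | zero => simp [scaleLR, Finsupp.mapDomain_zero]
  | add f g hf hg =>
      rw [smul_add, Finsupp.mapDomain_add, ← hf, ← hg, scaleLR, scaleLR, scaleLR,
        Finsupp.sum_add_index' (fun a => by simp) (fun a b₁ b₂ => by rw [mul_add, single_add])]
  | single a v =>
      rw [smul_single, Finsupp.mapDomain_single, scaleLR, Finsupp.sum_single_index (by simp)]
      rfl

lemma scaleLR_zero (m : MMon k n) (c : R) (b : FreeMonoid (Fin n)) :
    scaleLR m c (0 : SigModule R k n r) b = 0 := by
  simp [scaleLR_eq]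

lemma scaleLR_add (m : MMon k n) (c : R) (α β : SigModule R k n r) (b : FreeMonoid (Fin n)) :
    scaleLR m c (α + β) b = scaleLR m c α b + scaleLR m c β b := by
  simp [scaleLR_eq, smul_add, Finsupp.mapDomain_add]

lemma scaleLR_single (m : MMon k n) (c : R) (τ : ModMon k n r) (v : R) (b : FreeMonoid (Fin n)) :
    scaleLR m c (Finsupp.single τ v) b = Finsupp.single (mulLR m τ b) (c * v) := by
  rw [scaleLR_eq, smul_single, Finsupp.mapDomain_single, smul_eq_mul]

lemma scaleLR_comp (m m' : MMon k n) (c c' : R) (α : SigModule R k n r)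
    (b b' : FreeMonoid (Fin n)) :
    scaleLR m' c' (scaleLR m c α b) b' = scaleLR (m' * m) (c' * c) α (b * b') := by
  rw [scaleLR_eq, scaleLR_eq, scaleLR_eq, ← Finsupp.mapDomain_smul,
    ← Finsupp.mapDomain_comp, smul_smul]
  congr 1
  funext σ
  simp [Function.comp, mulLR_comp]

/-! ### barMap -/

variable (F : Fin r → MixedAlg R k n)

lemma barMap_zero : barMap F (0 : SigModule R k n r) = 0 := Finsupp.sum_zero_index

lemma barMap_single (τ : ModMon k n r) (v : R) :
    barMap F (Finsupp.single τ v) = trm ⟨τ.u, τ.a⟩ v * F τ.i * wrd τ.b := by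
  rw [barMap, Finsupp.sum_single_index]
  show MonoidAlgebra.single _ (0:R) * _ * _ = 0
  simp

lemma barMap_add (α β : SigModule R k n r) :
    barMap F (α + β) = barMap F α + barMap F β := by
  rw [barMap, barMap, barMap]
  apply Finsupp.sum_add_index'
  · intro a
    show MonoidAlgebra.single _ (0:R) * _ * _ = 0
    simp
  · intro a b₁ b₂
    show MonoidAlgebra.single _ _ * _ * _ = MonoidAlgebra.single _ _ * _ * _ + MonoidAlgebra.single _ _ * _ * _
    rw [MonoidAlgebra.single_add, add_mul, add_mul]

lemma barMap_neg (α : SigModule R k n r) : barMap F (-α) = - barMap F α := by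
  have := barMap_add F α (-α)
  rw [add_neg_cancel, barMap_zero] at this
  exact (neg_eq_of_add_eq_zero_right this.symm).symm

lemma barMap_sub (α β : SigModule R k n r) :
    barMap F (α - β) = barMap F α - barMap F β := by
  rw [sub_eq_add_neg, barMap_add, barMap_neg, sub_eq_add_neg]

lemma barMap_scaleLR (m : MMon k n) (c : R) (γ : SigModule R k n r) (b : FreeMonoid (Fin n)) :
    barMap F (scaleLR m c γ b) = trm m c * barMap F γ * wrd b := by
  induction γ using Finsupp.induction_linear with
  | zero => rw [scaleLR_zero, barMap_zero, mul_zero, zero_mul]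
  | add f g hf hg => rw [scaleLR_add, barMap_add, hf, hg, barMap_add, mul_add, add_mul]
  | single τ v =>
      rw [scaleLR_single, barMap_single, barMap_single]
      have h1 : (⟨(mulLR m τ b).u, (mulLR m τ b).a⟩ : MMon k n) = m * ⟨τ.u, τ.a⟩ :=
        MMon.ext rfl rfl
      have h2 : (wrd (mulLR m τ b).b : MixedAlg R k n) = wrd τ.b * wrd b := by
        rw [wrd_mk, wrd_mk, wrd_mk, trm_mul_trm, mul_one]
        exact congrArg (fun z => trm z 1) (MMon.ext (add_zero _).symm rfl)
      have h3 : (mulLR m τ b).i = τ.i := rfl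
      rw [h1, h2, h3, ← trm_mul_trm]
      simp only [mul_assoc]

end AlgLemmas
set_option linter.unusedSectionVars false
set_option linter.unnecessarySimpa false

open Finsupp

section OrderLemmas

variable {R : Type} [CommRing R] [IsDomain R] {k n r : ℕ} [NeZero r]
variable [LinearOrder (MMon k n)] [LinearOrder (ModMon k n r)]

lemma LMb_def (f : MixedAlg R k n) : LMb f = f.coeff.support.max := rfl
lemma sigb_def (α : SigModule R k n r) : sigb α = α.support.max := rfl
lemma LMd_def (f : MixedAlg R k n) : LMd f = f.coeff.support.max.unbotD 1 := rfl
lemma sigMd_def (α : SigModule R k n r) : sigMd α = α.support.max.unbotD default := rfl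

lemma LMb_ne_bot {f : MixedAlg R k n} : LMb f ≠ ⊥ ↔ f ≠ 0 := by
  rw [LMb_def, supp_max_ne_bot_iff, Ne, Ne, ← MonoidAlgebra.coeff_inj, MonoidAlgebra.coeff_zero]
lemma sigb_ne_bot {α : SigModule R k n r} : sigb α ≠ ⊥ ↔ α ≠ 0 := supp_max_ne_bot_iff

lemma coe_LMd {f : MixedAlg R k n} (hf : f ≠ 0) :
    ((LMd f : MMon k n) : WithBot (MMon k n)) = LMb f :=
  max_coe_unbot' (fun h => hf (MonoidAlgebra.coeff_injective (h.trans MonoidAlgebra.coeff_zero.symm))) 1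

lemma coe_sigMd {α : SigModule R k n r} (hα : α ≠ 0) :
    ((sigMd α : ModMon k n r) : WithBot (ModMon k n r)) = sigb α := max_coe_unbot' hα default

lemma LC_ne_zero {f : MixedAlg R k n} (hf : f ≠ 0) : LC f ≠ 0 :=
  topd_coeff_ne (fun h => hf (MonoidAlgebra.coeff_injective (h.trans MonoidAlgebra.coeff_zero.symm))) 1

lemma sigC_ne_zero {α : SigModule R k n r} (hα : α ≠ 0) : sigC α ≠ 0 := topd_coeff_ne hα default

variable {m : MMon k n} {c : R} {g : MixedAlg R k n} {b : FreeMonoid (Fin n)}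
variable {α : SigModule R k n r}

lemma tgb_apply (x : MMon k n) :
    ((trm m c * g * wrd b : MixedAlg R k n)).coeff (m * x * ⟨0, b⟩) = c * g.coeff x := by
  rw [tgb_eq, Finsupp.mapDomain_apply (mmon_mul_inj m b), Finsupp.smul_apply, smul_eq_mul]

lemma scale_apply (σ : ModMon k n r) :
    ((scaleLR m c α b : SigModule R k n r)) (mulLR m σ b) = c * α σ := by
  rw [scaleLR_eq, Finsupp.mapDomain_apply (mulLR_inj m b), Finsupp.smul_apply, smul_eq_mul]

lemma sigT_zero : sigT (0 : SigModule R k n r) = 0 := by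
  rw [sigT, sigC]; simp

lemma sigT_ne_zero (hα : α ≠ 0) : sigT α ≠ 0 :=
  fun h => sigC_ne_zero hα (Finsupp.single_eq_zero.1 h)

lemma sigMd_single {τ : ModMon k n r} {v : R} (hv : v ≠ 0) :
    sigMd (Finsupp.single τ v) = τ := by
  rw [sigMd_def, max_eq_of_bound (τ := τ) (fun x hx => ?_) (by simpa using hv)]
  · rfl
  · rw [Finsupp.support_single_ne_zero _ hv] at hx
    simp at hx
    exact le_of_eq hx

lemma sigC_single {τ : ModMon k n r} {v : R} (hv : v ≠ 0) :
    sigC (Finsupp.single τ v) = v := by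
  rw [sigC, sigMd_single hv, Finsupp.single_eq_same]

lemma sigT_single {τ : ModMon k n r} {v : R} (hv : v ≠ 0) :
    sigT (Finsupp.single τ v) = Finsupp.single τ v := by
  rw [sigT, sigMd_single hv, sigC_single hv]

lemma sigb_single {τ : ModMon k n r} {v : R} (hv : v ≠ 0) :
    sigb (Finsupp.single τ v) = (τ : WithBot (ModMon k n r)) := by
  rw [sigb_def, max_eq_of_bound (τ := τ) (fun x hx => ?_) (by simpa using hv)]
  rw [Finsupp.support_single_ne_zero _ hv] at hx
  simp at hx
  exact le_of_eq hx

/-- decompose an equality of `sigT`s -/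
lemma sigT_elim {δ : SigModule R k n r} (hα : α ≠ 0) (h : sigT δ = sigT α) :
    δ ≠ 0 ∧ sigMd δ = sigMd α ∧ sigC δ = sigC α := by
  rw [sigT, sigT] at h
  rcases (Finsupp.single_eq_single_iff _ _ _ _).1 h with ⟨h1, h2⟩ | h1
  · refine ⟨fun h0 => ?_, h1, h2⟩
    rw [h0] at h2
    exact sigC_ne_zero hα (h2.symm.trans (by rw [sigC]; simp))
  · exact absurd h1.2 (sigC_ne_zero hα)

lemma sigb_eq_coe (hα : α ≠ 0) :
    sigb α = ((sigMd α : ModMon k n r) : WithBot (ModMon k n r)) := (coe_sigMd hα).symm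

lemma sig_sub_lt {δ : SigModule R k n r} (hα : α ≠ 0) (h : sigT δ = sigT α) :
    sigb (α - δ) < sigb α := by
  obtain ⟨hδ, h1, h2⟩ := sigT_elim hα h
  rw [sigb_eq_coe hα]
  apply max_sub_lt
  · exact le_of_eq (coe_sigMd hα).symm
  · rw [← h1]; exact le_of_eq (coe_sigMd hδ).symm
  · calc α (sigMd α) = sigC α := rfl
      _ = sigC δ := h2.symm
      _ = δ (sigMd α) := by rw [sigC, h1]

lemma LTerm_elim {f h : MixedAlg R k n} (hf : f ≠ 0) (he : LTerm h = LTerm f) :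
    h ≠ 0 ∧ LMd h = LMd f ∧ LC h = LC f := by
  rw [LTerm, LTerm] at he
  rcases MonoidAlgebra.single_inj.1 he with ⟨h1, h2⟩ | h1
  · refine ⟨fun h0 => ?_, h1, h2⟩
    rw [h0] at h2
    exact LC_ne_zero hf (h2.symm.trans (by rw [LC]; simp))
  · exact absurd h1.2 (LC_ne_zero hf)

lemma LTerm_sub_lt {f h : MixedAlg R k n} (hf : f ≠ 0) (he : LTerm h = LTerm f) :
    LMb (f - h) < LMb f := by
  obtain ⟨hh, h1, h2⟩ := LTerm_elim hf he
  rw [LMb_def, ← coe_LMd hf]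
  apply max_sub_lt
  · exact le_of_eq (coe_LMd hf).symm
  · rw [← h1]; exact le_of_eq (coe_LMd hh).symm
  · calc f.coeff (LMd f) = LC f := rfl
      _ = LC h := h2.symm
      _ = h.coeff (LMd f) := by rw [LC, h1]

lemma LMd_neg (f : MixedAlg R k n) : LMd (-f) = LMd f := by
  rw [LMd_def, LMd_def, MonoidAlgebra.coeff_neg, Finsupp.support_neg]

lemma LC_neg (f : MixedAlg R k n) : LC (-f) = - LC f := by
  rw [LC, LC, LMd_neg, MonoidAlgebra.coeff_neg, Finsupp.neg_apply]

lemma LTerm_neg (f : MixedAlg R k n) : LTerm (-f) = trm (LMd f) (-(LC f)) := by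
  rw [LTerm, LMd_neg, LC_neg]

variable (hord : IsOrderSetting k n r)
include hord

lemma phi_mono (m : MMon k n) (w : FreeMonoid (Fin n)) :
    Monotone (fun x : MMon k n => m * x * ⟨0, w⟩) := fun _ _ h => hord.mon_mul _ _ _ _ h

lemma phi_strictMono (m : MMon k n) (w : FreeMonoid (Fin n)) :
    StrictMono (fun x : MMon k n => m * x * ⟨0, w⟩) :=
  (phi_mono hord m w).strictMono_of_injective (mmon_mul_inj m w)

lemma mulLR_mono (m : MMon k n) (b : FreeMonoid (Fin n)) :
    Monotone (fun σ : ModMon k n r => mulLR m σ b) := fun _ _ h => hord.mod_mul _ _ _ _ h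

lemma mulLR_strictMono (m : MMon k n) (b : FreeMonoid (Fin n)) :
    StrictMono (fun σ : ModMon k n r => mulLR m σ b) :=
  (mulLR_mono hord m b).strictMono_of_injective (mulLR_inj m b)

lemma mulLR_lt_iff {m : MMon k n} {b : FreeMonoid (Fin n)} {σ τ : ModMon k n r} :
    mulLR m σ b < mulLR m τ b ↔ σ < τ := (mulLR_strictMono hord m b).lt_iff_lt

lemma phi_lt_iff {m : MMon k n} {w : FreeMonoid (Fin n)} {x y : MMon k n} :
    m * x * ⟨0, w⟩ < m * y * ⟨0, w⟩ ↔ x < y := (phi_strictMono hord m w).lt_iff_lt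

lemma LMb_tgb (hc : c ≠ 0) (hg : g ≠ 0) :
    LMb (trm m c * g * wrd b) = ((m * LMd g * ⟨0, b⟩ : MMon k n) : WithBot (MMon k n)) := by
  rw [LMb_def, tgb_eq, mapDomain_max (phi_mono hord m b) (mmon_mul_inj m b),
    Finsupp.support_smul_eq hc, ← LMb_def, ← coe_LMd hg]
  rfl

lemma tgb_ne_zero (hc : c ≠ 0) (hg : g ≠ 0) : trm m c * g * wrd b ≠ 0 := by
  rw [← LMb_ne_bot, LMb_tgb hord hc hg]; exact WithBot.coe_ne_bot

lemma LMd_tgb (hc : c ≠ 0) (hg : g ≠ 0) :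
    LMd (trm m c * g * wrd b) = m * LMd g * ⟨0, b⟩ := by
  have h : (trm m c * g * wrd b).coeff.support.max
      = ((m * LMd g * ⟨0, b⟩ : MMon k n) : WithBot (MMon k n)) := LMb_tgb hord hc hg
  rw [LMd_def, h]
  rfl

lemma LC_tgb (hc : c ≠ 0) (hg : g ≠ 0) :
    LC (trm m c * g * wrd b) = c * LC g := by
  rw [LC, LMd_tgb hord hc hg, tgb_apply]; rfl

lemma LTerm_tgb (hc : c ≠ 0) (hg : g ≠ 0) :
    LTerm (trm m c * g * wrd b) = trm (m * LMd g * ⟨0, b⟩) (c * LC g) := by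
  rw [LTerm, LMd_tgb hord hc hg, LC_tgb hord hc hg]

lemma sigb_scale (hc : c ≠ 0) (hα : α ≠ 0) :
    sigb (scaleLR m c α b) = ((mulLR m (sigMd α) b : ModMon k n r) : WithBot (ModMon k n r)) := by
  rw [sigb_def, scaleLR_eq, mapDomain_max (mulLR_mono hord m b) (mulLR_inj m b),
    Finsupp.support_smul_eq hc, ← sigb_def, ← coe_sigMd hα]
  rfl

lemma scale_ne_zero (hc : c ≠ 0) (hα : α ≠ 0) : scaleLR m c α b ≠ 0 := by
  rw [← sigb_ne_bot, sigb_scale hord hc hα]; exact WithBot.coe_ne_bot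

lemma sigMd_scale (hc : c ≠ 0) (hα : α ≠ 0) :
    sigMd (scaleLR m c α b) = mulLR m (sigMd α) b := by
  have h : (scaleLR m c α b).support.max
      = ((mulLR m (sigMd α) b : ModMon k n r) : WithBot (ModMon k n r)) := sigb_scale hord hc hα
  rw [sigMd_def, h]
  rfl

lemma sigC_scale (hc : c ≠ 0) (hα : α ≠ 0) :
    sigC (scaleLR m c α b) = c * sigC α := by
  rw [sigC, sigMd_scale hord hc hα, scale_apply]; rfl

lemma sigT_scale (hc : c ≠ 0) (hα : α ≠ 0) :
    sigT (scaleLR m c α b) = Finsupp.single (mulLR m (sigMd α) b) (c * sigC α) := by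
  rw [sigT, sigMd_scale hord hc hα, sigC_scale hord hc hα]

end OrderLemmas
set_option linter.unusedSectionVars false

open FreeMonoid

section WordLemmas

variable {n : ℕ}

lemma fm_cases {x y z w : FreeMonoid (Fin n)} (h : x * y = z * w) :
    (∃ u, z = x * u ∧ y = u * w) ∨ (∃ u, x = z * u ∧ w = u * y) := by
  have hl : x.toList ++ y.toList = z.toList ++ w.toList := by
    rw [← toList_mul, ← toList_mul, h]
  rcases List.append_eq_append_iff.1 hl with ⟨u, hu1, hu2⟩ | ⟨u, hu1, hu2⟩
  · left
    refine ⟨ofList u, toList.injective ?_, toList.injective ?_⟩ <;>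
      simp [toList_mul, hu1, hu2]
  · right
    refine ⟨ofList u, toList.injective ?_, toList.injective ?_⟩ <;>
      simp [toList_mul, hu1, hu2]

lemma fm_length_pos {o : FreeMonoid (Fin n)} (ho : o ≠ 1) : 0 < o.length :=
  Nat.pos_of_ne_zero (fun h => ho (FreeMonoid.length_eq_zero.1 h))

/-- Any two occurrences of `P`, `Q` inside the same word give rise to an ambiguity
with common outer cofactors. -/
lemma word_factor (P Q wL wR vL vR : FreeMonoid (Fin n))
    (h : wL * P * wR = vL * Q * vR) :
    ∃ a b c d l r, WordAmb a b c d P Q ∧ wL = l * a ∧ wR = b * r ∧ vL = l * c ∧ vR = d * r := by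
  rw [mul_assoc, mul_assoc] at h
  rcases fm_cases h with ⟨u, hu1, hu2⟩ | ⟨u, hu1, hu2⟩
  · -- vL = wL * u, P * wR = u * (Q * vR)
    rcases fm_cases hu2 with ⟨t, ht1, ht2⟩ | ⟨o, ho1, ho2⟩
    · -- u = P * t, wR = t * (Q * vR) : external₁
      exact ⟨1, t * Q, P * t, 1, wL, vR, WordAmb.external₁ t P Q,
        (mul_one wL).symm, by rw [ht2, mul_assoc], by rw [hu1, ht1], (one_mul vR).symm⟩
    · -- P = u * o, Q * vR = o * wR
      rcases fm_cases ho2 with ⟨z, hz1, hz2⟩ | ⟨y, hy1, hy2⟩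
      · -- o = Q * z, vR = z * wR : inclusion₁
        refine ⟨1, 1, u, z, wL, wR, WordAmb.inclusion₁ u z P Q ?_,
          (mul_one wL).symm, (one_mul wR).symm, hu1, hz2⟩
        rw [ho1, hz1, mul_assoc]
      · -- Q = o * y, wR = y * vR
        by_cases hu0 : u = 1
        · -- P = o, Q = P * y : inclusion₂ with a = 1
          refine ⟨1, y, 1, 1, wL, vR, WordAmb.inclusion₂ 1 y P Q ?_,
            (mul_one wL).symm, hy2, by rw [hu1, hu0, mul_one], (one_mul vR).symm⟩
          rw [one_mul, ho1, hu0, one_mul, hy1]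
        by_cases hy0 : y = 1
        · -- Q = o, P = u * Q : inclusion₁ with b = 1
          refine ⟨1, 1, u, 1, wL, wR, WordAmb.inclusion₁ u 1 P Q ?_,
            (mul_one wL).symm, (one_mul wR).symm, hu1, ?_⟩
          · rw [ho1, hy1, hy0, mul_one, mul_one]
          · rw [one_mul, hy2, hy0, one_mul]
        by_cases ho0 : o = 1
        · -- P = u, Q = y, wR = Q * vR : external₁ with t = 1
          refine ⟨1, 1 * Q, P * 1, 1, wL, vR, WordAmb.external₁ 1 P Q,
            (mul_one wL).symm, ?_, ?_, (one_mul vR).symm⟩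
          · rw [hy2, one_mul, hy1, ho0, one_mul]
          · rw [hu1, mul_one, ho1, ho0, mul_one]
        · -- proper overlap : overlap₂
          refine ⟨1, y, u, 1, wL, vR, WordAmb.overlap₂ y u P Q ?_ hy0 hu0 ?_ ?_,
            (mul_one wL).symm, hy2, hu1, (one_mul vR).symm⟩
          · rw [ho1, hy1, mul_assoc]
          · rw [hy1, length_mul]
            have := fm_length_pos ho0
            omega
          · rw [ho1, length_mul]
            have := fm_length_pos ho0
            omega
  · -- wL = vL * u, Q * vR = u * (P * wR)
    rcases fm_cases hu2 with ⟨t, ht1, ht2⟩ | ⟨o, ho1, ho2⟩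
    · -- u = Q * t, vR = t * (P * wR) : external₂
      exact ⟨Q * t, 1, 1, t * P, vL, wR, WordAmb.external₂ t P Q,
        by rw [hu1, ht1], (one_mul wR).symm, (mul_one vL).symm, by rw [ht2, mul_assoc]⟩
    · -- Q = u * o, P * wR = o * vR
      rcases fm_cases ho2 with ⟨z, hz1, hz2⟩ | ⟨y, hy1, hy2⟩
      · -- o = P * z, wR = z * vR : inclusion₂
        refine ⟨u, z, 1, 1, vL, vR, WordAmb.inclusion₂ u z P Q ?_,
          hu1, hz2, (mul_one vL).symm, (one_mul vR).symm⟩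
        rw [ho1, hz1, mul_assoc]
      · -- P = o * y, vR = y * wR
        by_cases hu0 : u = 1
        · -- Q = o, P = Q * y : inclusion₁ with a = 1
          refine ⟨1, 1, 1, y, vL, wR, WordAmb.inclusion₁ 1 y P Q ?_,
            ?_, (one_mul wR).symm, (mul_one vL).symm, hy2⟩
          · rw [hy1, ho1, hu0, one_mul, one_mul]
          · rw [hu1, hu0, mul_one]
        by_cases hy0 : y = 1
        · -- P = o, Q = u * P : inclusion₂ with b = 1
          refine ⟨u, 1, 1, 1, vL, wR, WordAmb.inclusion₂ u 1 P Q ?_,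
            hu1, (one_mul wR).symm, (mul_one vL).symm, ?_⟩
          · rw [ho1, hy1, hy0, mul_one, mul_one]
          · rw [hy2, hy0, one_mul]
        by_cases ho0 : o = 1
        · -- Q = u, P = y : external₂ with t = 1
          refine ⟨Q * 1, 1, 1, 1 * P, vL, wR, WordAmb.external₂ 1 P Q,
            ?_, (one_mul wR).symm, (mul_one vL).symm, ?_⟩
          · rw [hu1, mul_one, ho1, ho0, mul_one]
          · rw [hy2, one_mul, hy1, ho0, one_mul]
        · -- proper overlap : overlap₁
          refine ⟨u, 1, 1, y, vL, wR, WordAmb.overlap₁ u y P Q ?_ hu0 hy0 ?_ ?_,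
            hu1, (one_mul wR).symm, (mul_one vL).symm, hy2⟩
          · rw [ho1, hy1, mul_assoc]
          · rw [ho1, length_mul]
            have := fm_length_pos ho0
            omega
          · rw [hy1, length_mul]
            have := fm_length_pos ho0
            omega

/-- The defining equality of an ambiguity: `a·p·b = c·q·d`. -/
lemma wordAmb_eq {a b c d p q : FreeMonoid (Fin n)} (h : WordAmb a b c d p q) :
    a * p * b = c * q * d := by
  cases h with
  | overlap₁ a b p q h ha hb hla hlb => rw [one_mul, mul_one, h]
  | overlap₂ a b p q h ha hb hla hlb => rw [one_mul, mul_one, h]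
  | inclusion₁ a b p q h => rw [one_mul, mul_one, h, mul_assoc]
  | inclusion₂ a b p q h => rw [one_mul, mul_one, h]
  | external₁ m p q => rw [one_mul, mul_one, ← mul_assoc]
  | external₂ m p q => rw [one_mul, mul_one, mul_assoc]

/-- two suffixes of a word are comparable -/
lemma fm_suffix_comparable {s x y l₁ l₂ : FreeMonoid (Fin n)} (h1 : s = l₁ * x)
    (h2 : s = l₂ * y) : (∃ t, x = t * y) ∨ (∃ t, y = t * x) := by
  rcases le_or_gt y.length x.length with hl | hl
  · left
    have hx : x.toList <:+ s.toList := ⟨l₁.toList, by rw [← toList_mul, ← h1]⟩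
    have hy : y.toList <:+ s.toList := ⟨l₂.toList, by rw [← toList_mul, ← h2]⟩
    obtain ⟨t, ht⟩ := List.suffix_of_suffix_length_le hy hx hl
    exact ⟨ofList t, toList.injective (by simp [toList_mul, ht])⟩
  · right
    have hx : x.toList <:+ s.toList := ⟨l₁.toList, by rw [← toList_mul, ← h1]⟩
    have hy : y.toList <:+ s.toList := ⟨l₂.toList, by rw [← toList_mul, ← h2]⟩
    obtain ⟨t, ht⟩ := List.suffix_of_suffix_length_le hx hy hl.le
    exact ⟨ofList t, toList.injective (by simp [toList_mul, ht])⟩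

/-- two prefixes of a word are comparable -/
lemma fm_prefix_comparable {s x y r₁ r₂ : FreeMonoid (Fin n)} (h1 : s = x * r₁)
    (h2 : s = y * r₂) : (∃ t, x = y * t) ∨ (∃ t, y = x * t) := by
  rcases le_or_gt y.length x.length with hl | hl
  · left
    have hx : x.toList <+: s.toList := ⟨r₁.toList, by rw [← toList_mul, ← h1]⟩
    have hy : y.toList <+: s.toList := ⟨r₂.toList, by rw [← toList_mul, ← h2]⟩
    obtain ⟨t, ht⟩ := List.prefix_of_prefix_length_le hy hx hl
    exact ⟨ofList t, toList.injective (by simp [toList_mul, ← ht])⟩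
  · right
    have hx : x.toList <+: s.toList := ⟨r₁.toList, by rw [← toList_mul, ← h1]⟩
    have hy : y.toList <+: s.toList := ⟨r₂.toList, by rw [← toList_mul, ← h2]⟩
    obtain ⟨t, ht⟩ := List.prefix_of_prefix_length_le hx hy hl.le
    exact ⟨ofList t, toList.injective (by simp [toList_mul, ← ht])⟩

end WordLemmas
set_option linter.unusedSectionVars false

open Finsupp

section TwoMult

variable {R : Type} [CommRing R] [IsDomain R] {k n r : ℕ} [NeZero r]
variable [LinearOrder (MMon k n)] [LinearOrder (ModMon k n r)]

lemma two_multiples (hord : IsOrderSetting k n r) {g g₀ : MixedAlg R k n}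
    {β β₀ : SigModule R k n r} (hβ : β ≠ 0) (hβ₀ : β₀ ≠ 0) {m m₀ : MMon k n}
    {b b₀ : FreeMonoid (Fin n)}
    (hM : m * LMd g * ⟨0, b⟩ = m₀ * LMd g₀ * ⟨0, b₀⟩)
    (hs : mulLR m₀ (sigMd β₀) b₀ < mulLR m (sigMd β) b) :
    ∃ (m₁ : MMon k n) (n₁ : FreeMonoid (Fin n)) (m₂ : MMon k n) (n₂ : FreeMonoid (Fin n))
      (m' : MMon k n) (b' : FreeMonoid (Fin n)),
      IsAmb g g₀ m₁ n₁ m₂ n₂ ∧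
      m = m' * m₁ ∧ b = n₁ * b' ∧ m₀ = m' * m₂ ∧ b₀ = n₂ * b' ∧
      m₂ * LMd g₀ * ⟨0, n₂⟩ = m₁ * LMd g * ⟨0, n₁⟩ ∧
      mulLR m₂ (sigMd β₀) n₂ < mulLR m₁ (sigMd β) n₁ ∧
      RegAmb β β₀ m₁ n₁ m₂ n₂ := by
  have hMc : m.c + (LMd g).c = m₀.c + (LMd g₀).c := by
    have := congrArg MMon.c hM
    simpa using this
  have hMw : m.w * (LMd g).w * b = m₀.w * (LMd g₀).w * b₀ := by
    have := congrArg MMon.w hM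
    simpa using this
  obtain ⟨a, bb, cc, dd, l, r', hamb, hwL, hwR, hvL, hvR⟩ :=
    word_factor (LMd g).w (LMd g₀).w m.w b m₀.w b₀ hMw
  have hgs : (LMd g).c ≤ (LMd g).c ⊔ (LMd g₀).c := le_sup_left
  have hg₀s : (LMd g₀).c ≤ (LMd g).c ⊔ (LMd g₀).c := le_sup_right
  have hsU : (LMd g).c ⊔ (LMd g₀).c ≤ m.c + (LMd g).c :=
    sup_le le_add_self (hMc ▸ le_add_self)
  have hm : m = (⟨m.c + (LMd g).c - ((LMd g).c ⊔ (LMd g₀).c), l⟩ : MMon k n) *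
      ⟨(LMd g).c ⊔ (LMd g₀).c - (LMd g).c, a⟩ := by
    refine MMon.ext ?_ hwL
    show m.c = m.c + (LMd g).c - ((LMd g).c ⊔ (LMd g₀).c) +
      ((LMd g).c ⊔ (LMd g₀).c - (LMd g).c)
    rw [tsub_add_tsub_cancel hsU hgs, add_tsub_cancel_right]
  have hm₀ : m₀ = (⟨m.c + (LMd g).c - ((LMd g).c ⊔ (LMd g₀).c), l⟩ : MMon k n) *
      ⟨(LMd g).c ⊔ (LMd g₀).c - (LMd g₀).c, cc⟩ := by
    refine MMon.ext ?_ hvL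
    show m₀.c = m.c + (LMd g).c - ((LMd g).c ⊔ (LMd g₀).c) +
      ((LMd g).c ⊔ (LMd g₀).c - (LMd g₀).c)
    rw [tsub_add_tsub_cancel hsU hg₀s, hMc, add_tsub_cancel_right]
  have hlcm : (⟨(LMd g).c ⊔ (LMd g₀).c - (LMd g₀).c, cc⟩ : MMon k n) * LMd g₀ * ⟨0, dd⟩ =
      (⟨(LMd g).c ⊔ (LMd g₀).c - (LMd g).c, a⟩ : MMon k n) * LMd g * ⟨0, bb⟩ := by
    refine MMon.ext ?_ (wordAmb_eq hamb).symm
    show (LMd g).c ⊔ (LMd g₀).c - (LMd g₀).c + (LMd g₀).c + 0 =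
      (LMd g).c ⊔ (LMd g₀).c - (LMd g).c + (LMd g).c + 0
    rw [add_zero, add_zero, tsub_add_cancel_of_le hg₀s, tsub_add_cancel_of_le hgs]
  have hslt : mulLR ⟨(LMd g).c ⊔ (LMd g₀).c - (LMd g₀).c, cc⟩ (sigMd β₀) dd <
      mulLR ⟨(LMd g).c ⊔ (LMd g₀).c - (LMd g).c, a⟩ (sigMd β) bb := by
    rw [hm, hm₀, hwR, hvR, ← mulLR_comp, ← mulLR_comp] at hs
    exact (mulLR_lt_iff hord).1 hs
  refine ⟨_, bb, _, dd, _, r', ⟨a, bb, cc, dd, hamb, rfl, rfl, rfl, rfl⟩,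
    hm, hwR, hm₀, hvR, hlcm, hslt, ?_⟩
  intro hcon
  rw [sigb_scale hord one_ne_zero hβ, sigb_scale hord one_ne_zero hβ₀] at hcon
  exact absurd (WithBot.coe_inj.1 hcon) (ne_of_gt hslt)

variable [GCDMonoid R]

lemma cofL_spec (g g₀ : MixedAlg R k n) : lcm (LC g) (LC g₀) = LC g * cofL g g₀ :=
  Classical.choose_spec (dvd_lcm_left (LC g) (LC g₀))

lemma cofR_spec (g g₀ : MixedAlg R k n) : lcm (LC g) (LC g₀) = LC g₀ * cofR g g₀ :=
  Classical.choose_spec (dvd_lcm_right (LC g) (LC g₀))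

lemma cofL_ne_zero {g g₀ : MixedAlg R k n} (hg : LC g ≠ 0) (hg₀ : LC g₀ ≠ 0) :
    cofL g g₀ ≠ 0 := by
  intro h
  have := cofL_spec g g₀
  rw [h, mul_zero] at this
  rcases (lcm_eq_zero_iff _ _).1 this with h' | h' <;> [exact hg h'; exact hg₀ h']

lemma cofR_ne_zero {g g₀ : MixedAlg R k n} (hg : LC g ≠ 0) (hg₀ : LC g₀ ≠ 0) :
    cofR g g₀ ≠ 0 := by
  intro h
  have := cofR_spec g g₀
  rw [h, mul_zero] at this
  rcases (lcm_eq_zero_iff _ _).1 this with h' | h' <;> [exact hg h'; exact hg₀ h']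

/-- a common multiple of the leading coefficients factors through `cofL` -/
lemma exists_e {g g₀ : MixedAlg R k n} {c c₀ : R} (hg : LC g ≠ 0)
    (hc : c ≠ 0) (h : c * LC g = c₀ * LC g₀) :
    ∃ e, e ≠ 0 ∧ c = e * cofL g g₀ := by
  have d1 : LC g ∣ c * LC g := dvd_mul_left _ _
  have d2 : LC g₀ ∣ c * LC g := h ▸ dvd_mul_left _ _
  obtain ⟨e, he⟩ := lcm_dvd d1 d2
  rw [cofL_spec g g₀, mul_assoc] at he
  have hce : c = cofL g g₀ * e := by
    apply mul_left_cancel₀ hg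
    rw [mul_comm (LC g) c]
    exact he
  refine ⟨e, fun h0 => hc (by rw [hce, h0, mul_zero]), by rw [hce, mul_comm]⟩

variable [IsPrincipalIdealRing R]

lemma exists_bezout (a b : R) (ha : a ≠ 0) (hb : b ≠ 0) :
    ∃ c d, c ≠ 0 ∧ c * a + d * b = gcd a b := by
  obtain ⟨x, y, hxy⟩ := exists_gcd_eq_mul_add_mul a b
  have hgcd : gcd a b ≠ 0 := fun h0 => ha (by
    have := gcd_dvd_left a b
    rw [h0] at this
    exact zero_dvd_iff.1 this)
  by_cases hx : x = 0
  · obtain ⟨a', ha'⟩ := gcd_dvd_left a b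
    obtain ⟨b', hb'⟩ := gcd_dvd_right a b
    have hb'0 : b' ≠ 0 := fun h0 => hb (by rw [hb', h0, mul_zero])
    refine ⟨x + b', y - a', fun h0 => hb'0 (by rwa [hx, zero_add] at h0), ?_⟩
    have key : b' * a = a' * b := by
      apply mul_left_cancel₀ hgcd
      rw [← mul_assoc, ← mul_assoc, ← ha', ← hb']
      exact mul_comm b a
    calc (x + b') * a + (y - a') * b = (a * x + b * y) + (b' * a - a' * b) := by ring
      _ = gcd a b := by rw [key, sub_self, add_zero, ← hxy]
  · exact ⟨x, y, hx, by rw [mul_comm x a, mul_comm y b, ← hxy]⟩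

end TwoMult
set_option linter.unusedSectionVars false

open Finsupp

section Helpers

variable {R : Type} [CommRing R] [IsDomain R] {k n r : ℕ} [NeZero r]
variable [LinearOrder (MMon k n)] [LinearOrder (ModMon k n r)]

lemma trm_zero (m : MMon k n) : (trm m (0 : R)) = 0 := MonoidAlgebra.single_zero m

lemma tgb_zero_coeff (m : MMon k n) (g : MixedAlg R k n) (b : FreeMonoid (Fin n)) :
    trm m (0 : R) * g * wrd b = 0 := by rw [trm_zero, zero_mul, zero_mul]

lemma scaleLR_zero_coeff (m : MMon k n) (α : SigModule R k n r) (b : FreeMonoid (Fin n)) :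
    scaleLR m (0 : R) α b = 0 := by
  rw [scaleLR_eq, zero_smul, Finsupp.mapDomain_zero]

lemma scaleLR_ne_zero_coeff {m : MMon k n} {c : R} {α : SigModule R k n r}
    {b : FreeMonoid (Fin n)} (h : scaleLR m c α b ≠ 0) : c ≠ 0 :=
  fun h0 => h (h0 ▸ scaleLR_zero_coeff m α b)

lemma scaleLR_ne_zero_arg {m : MMon k n} {c : R} {α : SigModule R k n r}
    {b : FreeMonoid (Fin n)} (h : scaleLR m c α b ≠ 0) : α ≠ 0 :=
  fun h0 => h (by rw [h0, scaleLR_zero])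

lemma mmon_shuffle (m' x L : MMon k n) (b₂ b' : FreeMonoid (Fin n)) :
    (m' * x) * L * (⟨0, b₂ * b'⟩ : MMon k n) = m' * (x * L * ⟨0, b₂⟩) * ⟨0, b'⟩ := by
  refine MMon.ext ?_ ?_
  · show m'.c + x.c + L.c + 0 = m'.c + (x.c + L.c + 0) + 0
    simp [add_assoc]
  · show m'.w * x.w * L.w * (b₂ * b') = m'.w * (x.w * L.w * b₂) * b'
    simp [mul_assoc]

lemma gcd_ne_zero' [GCDMonoid R] {a : R} (b : R) (ha : a ≠ 0) : gcd a b ≠ 0 :=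
  fun h => ha (zero_dvd_iff.1 (h ▸ gcd_dvd_left a b))

variable (hord : IsOrderSetting k n r)
include hord

lemma scale_sigT {m' : MMon k n} {e : R} {b' : FreeMonoid (Fin n)} (he : e ≠ 0)
    (X : SigModule R k n r) :
    scaleLR m' e (sigT X) b' = sigT (scaleLR m' e X b') := by
  rcases eq_or_ne X 0 with rfl | hX
  · rw [sigT_zero, scaleLR_zero]; exact sigT_zero.symm
  · rw [sigT, scaleLR_single, sigT_scale hord he hX]

lemma ambSIG_eq [GCDMonoid R] {g g₀ : MixedAlg R k n} {β β₀ : SigModule R k n r}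
    {m₁ m₂ : MMon k n} {n₁ n₂ : FreeMonoid (Fin n)}
    (hLCg : LC g ≠ 0) (hLCg₀ : LC g₀ ≠ 0) (hβ : β ≠ 0) (hβ₀ : β₀ ≠ 0)
    (hlt : mulLR m₂ (sigMd β₀) n₂ < mulLR m₁ (sigMd β) n₁) :
    ambSIG g g₀ β β₀ m₁ n₁ m₂ n₂ =
      Finsupp.single (mulLR m₁ (sigMd β) n₁) (cofL g g₀ * sigC β) := by
  rw [ambSIG, if_pos, sigT_scale hord (cofL_ne_zero hLCg hLCg₀) hβ]
  rw [sigb_scale hord (cofR_ne_zero hLCg hLCg₀) hβ₀,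
    sigb_scale hord (cofL_ne_zero hLCg hLCg₀) hβ]
  exact WithBot.coe_le_coe.2 hlt.le

omit hord

lemma single_add_single_eq {σ₁ σ₂ s : ModMon k n r} {v₁ v₂ v : R} (hv₁ : v₁ ≠ 0)
    (hv₂ : v₂ ≠ 0) (hv : v ≠ 0)
    (h : Finsupp.single σ₁ v₁ + Finsupp.single σ₂ v₂ = Finsupp.single s v) :
    σ₁ = s ∧ σ₂ = s ∧ v₁ + v₂ = v := by
  by_cases hσ : σ₁ = σ₂
  · subst hσ
    rw [← Finsupp.single_add] at h
    rcases (Finsupp.single_eq_single_iff _ _ _ _).1 h with ⟨h1, h2⟩ | ⟨_, h2⟩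
    · exact ⟨h1, h1, h2⟩
    · exact absurd h2 hv
  · have h1 : v₁ = Finsupp.single s v σ₁ := by
      have h' := DFunLike.congr_fun h σ₁
      rwa [Finsupp.add_apply, Finsupp.single_eq_same,
        Finsupp.single_eq_of_ne hσ, add_zero] at h'
    have h2 : v₂ = Finsupp.single s v σ₂ := by
      have h' := DFunLike.congr_fun h σ₂
      rwa [Finsupp.add_apply, Finsupp.single_eq_same,
        Finsupp.single_eq_of_ne (Ne.symm hσ), zero_add] at h'
    have hs1 : σ₁ = s := by
      by_contra hne
      rw [Finsupp.single_eq_of_ne hne] at h1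
      exact hv₁ h1
    have hs2 : σ₂ = s := by
      by_contra hne
      rw [Finsupp.single_eq_of_ne hne] at h2
      exact hv₂ h2
    exact absurd (hs1.trans hs2.symm) hσ

end Helpers
set_option linter.unusedSectionVars false

open Finsupp

section CaseIII

variable {R : Type} [CommRing R] [IsDomain R] [IsPrincipalIdealRing R] [GCDMonoid R]
variable {k n r : ℕ} [NeZero r]
variable [LinearOrder (MMon k n)] [LinearOrder (ModMon k n r)]

/-- membership facts -/
lemma memG_facts {F : Fin r → MixedAlg R k n} {G : Set (MixedAlg R k n × SigModule R k n r)}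
    (hGI : ∀ p ∈ G, Labeled F p) (h1 : ∀ p ∈ G, p.1 ≠ 0)
    {g : MixedAlg R k n} {β : SigModule R k n r} (hgG : (g, β) ∈ G) :
    g ≠ 0 ∧ β ≠ 0 ∧ barMap F β = g := by
  have hbar : barMap F β = g := hGI (g, β) hgG
  have hg : g ≠ 0 := h1 (g, β) hgG
  exact ⟨hg, fun h0 => hg (by rw [← hbar, h0, barMap_zero]), hbar⟩

/-- The G-polynomial step: from two multiples of `G`-elements with the same leading
monomial equal to `LMd f`, whose leading coefficients sum to `LC f`, and whose
signatures are dominated as required, produce a sig-reduction of `f`. -/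
lemma case_iii (hord : IsOrderSetting k n r)
    (F : Fin r → MixedAlg R k n) (G : Set (MixedAlg R k n × SigModule R k n r))
    (hGI : ∀ p ∈ G, Labeled F p) (h1 : ∀ p ∈ G, p.1 ≠ 0) (h2 : CompleteSet G)
    {g g₀ : MixedAlg R k n} {β β₀ : SigModule R k n r}
    (hgG : (g, β) ∈ G) (hg₀G : (g₀, β₀) ∈ G)
    {m m₀ : MMon k n} {c c₀ : R} {b b₀ : FreeMonoid (Fin n)}
    (hc : c ≠ 0) (hc₀ : c₀ ≠ 0)
    (hM : m * LMd g * ⟨0, b⟩ = m₀ * LMd g₀ * ⟨0, b₀⟩)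
    (hslt : mulLR m₀ (sigMd β₀) b₀ < mulLR m (sigMd β) b)
    {f : MixedAlg R k n} (hf : f ≠ 0)
    (hLMf : LMd f = m * LMd g * ⟨0, b⟩)
    (hLCf : LC f = c * LC g + c₀ * LC g₀)
    {α : SigModule R k n r}
    (hαs : ((mulLR m (sigMd β) b : ModMon k n r) : WithBot (ModMon k n r)) ≤ sigb α) :
    SigReducible G f α := by
  obtain ⟨hg, hβ, hgbar⟩ := memG_facts hGI h1 hgG
  obtain ⟨hg₀, hβ₀, hg₀bar⟩ := memG_facts hGI h1 hg₀G
  have hLCg := LC_ne_zero hg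
  have hLCg₀ := LC_ne_zero hg₀
  obtain ⟨m₁, n₁, m₂, n₂, m', b', hamb, hm, hb, hm₀, hb₀, hlcm, hlt, hreg⟩ :=
    two_multiples hord hβ hβ₀ hM hslt
  -- Bezout coefficients
  obtain ⟨c', d', hc', hbez⟩ := exists_bezout (LC g) (LC g₀) hLCg hLCg₀
  have hgcd : gcd (LC g) (LC g₀) ≠ 0 := gcd_ne_zero' _ hLCg
  -- the G-polynomial data
  have hGP : LMd (GPolP c' d' g g₀ m₁ n₁ m₂ n₂) = m₁ * LMd g * ⟨0, n₁⟩ ∧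
      LC (GPolP c' d' g g₀ m₁ n₁ m₂ n₂) = gcd (LC g) (LC g₀) := by
    have hp1 : LMb (trm m₁ c' * g * wrd n₁)
        = ((m₁ * LMd g * ⟨0, n₁⟩ : MMon k n) : WithBot (MMon k n)) := LMb_tgb hord hc' hg
    have hq1 : LMb (trm m₂ d' * g₀ * wrd n₂)
        ≤ ((m₁ * LMd g * ⟨0, n₁⟩ : MMon k n) : WithBot (MMon k n)) := by
      rcases eq_or_ne d' 0 with rfl | hd'
      · rw [tgb_zero_coeff]
        simp [LMb_def]
      · rw [LMb_tgb hord hd' hg₀, hlcm]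
    have happ : (GPolP c' d' g g₀ m₁ n₁ m₂ n₂).coeff (m₁ * LMd g * ⟨0, n₁⟩)
        = gcd (LC g) (LC g₀) := by
      rw [GPolP, MonoidAlgebra.coeff_add, Finsupp.add_apply]
      have e1 : (trm m₁ c' * g * wrd n₁ : MixedAlg R k n).coeff (m₁ * LMd g * ⟨0, n₁⟩)
          = c' * LC g := tgb_apply (LMd g)
      have e2 : (trm m₂ d' * g₀ * wrd n₂ : MixedAlg R k n).coeff (m₁ * LMd g * ⟨0, n₁⟩)
          = d' * LC g₀ := by
        rw [← hlcm]
        exact tgb_apply (LMd g₀)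
      rw [e1, e2, hbez]
    have hbound : ∀ x ∈ (GPolP c' d' g g₀ m₁ n₁ m₂ n₂).coeff.support, x ≤ m₁ * LMd g * ⟨0, n₁⟩ := by
      intro x hx
      refine supp_le_of_max_le ?_ hx
      exact max_add_le (le_of_eq hp1) hq1
    have hLM : LMd (GPolP c' d' g g₀ m₁ n₁ m₂ n₂) = m₁ * LMd g * ⟨0, n₁⟩ :=
      topd_eq_of_bound hbound (happ ▸ hgcd) 1
    exact ⟨hLM, by rw [LC, hLM, happ]⟩
  -- the module part
  have hGM : sigb (GPolM c' d' β β₀ m₁ n₁ m₂ n₂)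
      = ((mulLR m₁ (sigMd β) n₁ : ModMon k n r) : WithBot (ModMon k n r)) := by
    have hp1 : sigb (scaleLR m₁ c' β n₁)
        = ((mulLR m₁ (sigMd β) n₁ : ModMon k n r) : WithBot (ModMon k n r)) :=
      sigb_scale hord hc' hβ
    have hq1 : sigb (scaleLR m₂ d' β₀ n₂)
        ≤ ((mulLR m₁ (sigMd β) n₁ : ModMon k n r) : WithBot (ModMon k n r)) := by
      rcases eq_or_ne d' 0 with rfl | hd'
      · rw [scaleLR_zero_coeff]
        simp [sigb_def]
      · rw [sigb_scale hord hd' hβ₀]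
        exact WithBot.coe_le_coe.2 hlt.le
    have happ : (GPolM c' d' β β₀ m₁ n₁ m₂ n₂) (mulLR m₁ (sigMd β) n₁) = c' * sigC β := by
      rw [GPolM, Finsupp.add_apply]
      have e1 : (scaleLR m₁ c' β n₁ : SigModule R k n r) (mulLR m₁ (sigMd β) n₁)
          = c' * sigC β := scale_apply (sigMd β)
      have e2 : (scaleLR m₂ d' β₀ n₂ : SigModule R k n r) (mulLR m₁ (sigMd β) n₁) = 0 := by
        apply Finsupp.notMem_support_iff.1
        intro hmem
        have hle : mulLR m₁ (sigMd β) n₁ ≤ mulLR m₂ (sigMd β₀) n₂ := by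
          rcases eq_or_ne d' 0 with rfl | hd'
          · rw [scaleLR_zero_coeff] at hmem
            simp at hmem
          · exact supp_le_of_max_le (le_of_eq (sigb_scale hord hd' hβ₀)) hmem
        exact absurd hlt (not_lt.2 hle)
      rw [e1, e2, add_zero]
    apply max_eq_of_bound
    · intro x hx
      refine supp_le_of_max_le ?_ hx
      exact max_add_le (le_of_eq hp1) hq1
    · rw [happ]
      exact mul_ne_zero hc' (sigC_ne_zero hβ)
  -- apply completeness
  have hSIG : sigb (ambSIG g g₀ β β₀ m₁ n₁ m₂ n₂)
      = ((mulLR m₁ (sigMd β) n₁ : ModMon k n r) : WithBot (ModMon k n r)) := by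
    rw [ambSIG_eq hord hLCg hLCg₀ hβ hβ₀ hlt,
      sigb_single (mul_ne_zero (cofL_ne_zero hLCg hLCg₀) (sigC_ne_zero hβ))]
  obtain ⟨g₂, β₂, hg₂G, m₂', c₂, b₂, hc₂, hLT₂, _, hsig₂⟩ :=
    h2 g β g₀ β₀ hgG hg₀G m₁ n₁ m₂ n₂ hamb c' d' hbez (hGM.trans hSIG.symm)
  obtain ⟨hg₂, hβ₂, hg₂bar⟩ := memG_facts hGI h1 hg₂G
  have hLT₂' : trm (m₂' * LMd g₂ * ⟨0, b₂⟩) (c₂ * LC g₂)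
      = trm (m₁ * LMd g * ⟨0, n₁⟩) (gcd (LC g) (LC g₀)) := by
    rw [← LTerm_tgb hord hc₂ hg₂, hLT₂, LTerm, hGP.1, hGP.2]
  rcases MonoidAlgebra.single_inj.1 hLT₂' with ⟨hL2, hC2⟩ | ⟨_, h0⟩
  · -- the reducer, scaled up
    obtain ⟨w, hw⟩ : gcd (LC g) (LC g₀) ∣ LC f := by
      rw [hLCf]
      exact dvd_add (Dvd.dvd.mul_left (gcd_dvd_left _ _) c)
        (Dvd.dvd.mul_left (gcd_dvd_right _ _) c₀)
    have hw0 : w ≠ 0 := by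
      intro h0
      rw [h0, mul_zero] at hw
      exact LC_ne_zero hf hw
    have hmon : (m' * m₂') * LMd g₂ * (⟨0, b₂ * b'⟩ : MMon k n) = LMd f := by
      rw [mmon_shuffle, hL2, ← mmon_shuffle, ← hm, ← hb, hLMf]
    have hcoef : (w * c₂) * LC g₂ = LC f := by
      rw [mul_assoc, hC2, hw, mul_comm]
    have hLTf : LTerm (trm (m' * m₂') (w * c₂) * g₂ * wrd (b₂ * b')) = LTerm f := by
      rw [LTerm_tgb hord (mul_ne_zero hw0 hc₂) hg₂, hmon, hcoef, LTerm]
    refine ⟨g₂, β₂, hg₂G, m' * m₂', w * c₂, b₂ * b', mul_ne_zero hw0 hc₂, hLTf,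
      LTerm_sub_lt hf hLTf, ?_⟩
    -- signature bound
    rw [sigb_scale hord (mul_ne_zero hw0 hc₂) hβ₂]
    refine le_trans ?_ hαs
    rw [WithBot.coe_le_coe]
    have h1' : mulLR m₂' (sigMd β₂) b₂ ≤ mulLR m₁ (sigMd β) n₁ := by
      have h'' := hsig₂.trans (le_of_eq hGM)
      rw [sigb_scale hord hc₂ hβ₂] at h''
      exact WithBot.coe_le_coe.1 h''
    calc mulLR (m' * m₂') (sigMd β₂) (b₂ * b')
        = mulLR m' (mulLR m₂' (sigMd β₂) b₂) b' := (mulLR_comp _ _ _ _ _).symm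
      _ ≤ mulLR m' (mulLR m₁ (sigMd β) n₁) b' := hord.mod_mul _ _ _ _ h1'
      _ = mulLR m (sigMd β) b := by rw [mulLR_comp, ← hm, ← hb]
  · exact absurd h0 hgcd

end CaseIII
set_option linter.unusedSectionVars false
set_option linter.unusedVariables false

open Finsupp

section CaseIV

variable {R : Type} [CommRing R] [IsDomain R] [IsPrincipalIdealRing R] [GCDMonoid R]
variable {k n r : ℕ} [NeZero r]
variable [LinearOrder (MMon k n)] [LinearOrder (ModMon k n r)]

/-- The cover step: from two multiples of `G`-elements with the same leading monomial
whose leading terms cancel, where the first one realizes the signature of `α`,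
either the signature of `α` is realized by an `H`-multiple, or `α` can be modified by an
`H`-multiple (without changing its bar image or its signature monomial) so that its
signature term is realized by a `G`-multiple of strictly smaller leading monomial. -/
lemma case_iv (hord : IsOrderSetting k n r)
    (F : Fin r → MixedAlg R k n) (G : Set (MixedAlg R k n × SigModule R k n r))
    (H : Set (SigModule R k n r))
    (hGI : ∀ p ∈ G, Labeled F p) (h1 : ∀ p ∈ G, p.1 ≠ 0)
    (hHsyz : ∀ γ ∈ H, IsSyzygy F γ)
    (h4 : ∀ g₁ β₁ g₂ β₂, (g₁, β₁) ∈ G → (g₂, β₂) ∈ G →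
        ∀ m₁ n₁ m₂ n₂, IsAmb g₁ g₂ m₁ n₁ m₂ n₂ → RegAmb β₁ β₂ m₁ n₁ m₂ n₂ →
          CoveredBy G H (ambSIG g₁ g₂ β₁ β₂ m₁ n₁ m₂ n₂) (ambLM g₁ m₁ n₁))
    {g g₀ : MixedAlg R k n} {β β₀ : SigModule R k n r}
    (hgG : (g, β) ∈ G) (hg₀G : (g₀, β₀) ∈ G)
    {m m₀ : MMon k n} {c c₀ : R} {b b₀ : FreeMonoid (Fin n)}
    (hc : c ≠ 0) (hc₀ : c₀ ≠ 0)
    (hM : m * LMd g * ⟨0, b⟩ = m₀ * LMd g₀ * ⟨0, b₀⟩)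
    (hslt : mulLR m₀ (sigMd β₀) b₀ < mulLR m (sigMd β) b)
    (hcoef : c₀ * LC g₀ = - (c * LC g))
    {α : SigModule R k n r} (hα : α ≠ 0)
    (hsigT : sigT α = sigT (scaleLR m c β b)) :
    (∃ γ ∈ H, ∃ (m₃ : MMon k n) (c₃ : R) (b₃ : FreeMonoid (Fin n)), c₃ ≠ 0 ∧
        sigT α = sigT (scaleLR m₃ c₃ γ b₃)) ∨
    (∃ (α' : SigModule R k n r) (g'' : MixedAlg R k n) (β'' : SigModule R k n r)
        (m₃ : MMon k n) (c₃ : R) (b₃ : FreeMonoid (Fin n)),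
        (g'', β'') ∈ G ∧ barMap F α' = barMap F α ∧ sigMd α' = sigMd α ∧ α' ≠ 0 ∧
        c₃ ≠ 0 ∧ sigT α' = sigT (scaleLR m₃ c₃ β'' b₃) ∧
        m₃ * LMd g'' * ⟨0, b₃⟩ < m * LMd g * ⟨0, b⟩ ∧
        (∃ γH ∈ H, ∃ (mH : MMon k n) (cH : R) (bH : FreeMonoid (Fin n)),
          α' = α - scaleLR mH cH γH bH)) := by
  obtain ⟨hg, hβ, hgbar⟩ := memG_facts hGI h1 hgG
  obtain ⟨hg₀, hβ₀, hg₀bar⟩ := memG_facts hGI h1 hg₀G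
  have hLCg := LC_ne_zero hg
  have hLCg₀ := LC_ne_zero hg₀
  obtain ⟨m₁, n₁, m₂, n₂, m', b', hamb, hm, hb, hm₀, hb₀, hlcm, hlt, hreg⟩ :=
    two_multiples hord hβ hβ₀ hM hslt
  -- extract the factor e with c = e * cofL
  obtain ⟨e, he, hce⟩ : ∃ e, e ≠ 0 ∧ c = e * cofL g g₀ :=
    exists_e (c₀ := -c₀) hLCg hc (by rw [neg_mul, hcoef, neg_neg])
  -- the cover data
  obtain ⟨g'', β'', hg''G, γ, hγH, mc, cc, bc, mc', cc', bc', hcov, hcovLM⟩ :=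
    h4 g β g₀ β₀ hgG hg₀G m₁ n₁ m₂ n₂ hamb hreg
  obtain ⟨hg'', hβ'', hg''bar⟩ := memG_facts hGI h1 hg''G
  -- scale the cover equation by (m', e, b')
  have key : sigT α = sigT (scaleLR (m' * mc) (e * cc) β'' (bc * b')) +
      sigT (scaleLR (m' * mc') (e * cc') γ (bc' * b')) := by
    have h₁ : scaleLR m' e (ambSIG g g₀ β β₀ m₁ n₁ m₂ n₂) b' = sigT α := by
      rw [ambSIG_eq hord hLCg hLCg₀ hβ hβ₀ hlt, scaleLR_single, hsigT,
        sigT_scale hord hc hβ]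
      congr 1
      · rw [mulLR_comp, ← hm, ← hb]
      · rw [← mul_assoc, ← hce]
    rw [← h₁, hcov, scaleLR_add, scale_sigT hord he, scale_sigT hord he,
      scaleLR_comp, scaleLR_comp]
  by_cases hX₁ : sigT (scaleLR (m' * mc) (e * cc) β'' (bc * b')) = 0
  · -- signature realized by the H-multiple
    left
    rw [hX₁, zero_add] at key
    have hX₂ne : scaleLR (m' * mc') (e * cc') γ (bc' * b') ≠ 0 := by
      intro h0
      rw [h0, sigT_zero] at key
      exact sigT_ne_zero hα key
    exact ⟨γ, hγH, m' * mc', e * cc', bc' * b',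
      scaleLR_ne_zero_coeff hX₂ne, key⟩
  · right
    have hX₁ne : scaleLR (m' * mc) (e * cc) β'' (bc * b') ≠ 0 :=
      fun h0 => hX₁ (by rw [h0, sigT_zero])
    have hecc : e * cc ≠ 0 := scaleLR_ne_zero_coeff hX₁ne
    have hcc : cc ≠ 0 := fun h0 => hecc (by rw [h0, mul_zero])
    -- the new, smaller leading monomial
    have hMlt : (m' * mc) * LMd g'' * (⟨0, bc * b'⟩ : MMon k n) < m * LMd g * ⟨0, b⟩ := by
      have h0 : LMb (trm mc cc * g'' * wrd bc) <
          ((ambLM g m₁ n₁ : MMon k n) : WithBot (MMon k n)) := hcovLM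
      rw [LMb_tgb hord hcc hg'', WithBot.coe_lt_coe] at h0
      have h1' := phi_strictMono hord m' b' h0
      simp only at h1'
      calc (m' * mc) * LMd g'' * (⟨0, bc * b'⟩ : MMon k n)
          = m' * (mc * LMd g'' * ⟨0, bc⟩) * ⟨0, b'⟩ := mmon_shuffle _ _ _ _ _
        _ < m' * ambLM g m₁ n₁ * ⟨0, b'⟩ := h1'
        _ = m * LMd g * ⟨0, b⟩ := by
            rw [ambLM, ← mmon_shuffle, ← hm, ← hb]
  -- case on whether the H-part vanishes
    by_cases hX₂ : sigT (scaleLR (m' * mc') (e * cc') γ (bc' * b')) = 0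
    · rw [hX₂, add_zero] at key
      exact ⟨α, g'', β'', m' * mc, e * cc, bc * b', hg''G, rfl, rfl, hα, hecc, key, hMlt,
        γ, hγH, m' * mc', 0, bc' * b', by rw [scaleLR_zero_coeff, sub_zero]⟩
    · -- both parts nonzero: subtract the H-multiple from α
      have hX₂ne : scaleLR (m' * mc') (e * cc') γ (bc' * b') ≠ 0 :=
        fun h0 => hX₂ (by rw [h0, sigT_zero])
      set X₂ := scaleLR (m' * mc') (e * cc') γ (bc' * b') with hX₂def
      have hkey' : Finsupp.single (sigMd (scaleLR (m' * mc) (e * cc) β'' (bc * b')))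
          (sigC (scaleLR (m' * mc) (e * cc) β'' (bc * b'))) +
          Finsupp.single (sigMd X₂) (sigC X₂) =
          Finsupp.single (sigMd α) (sigC α) := by
        rw [← sigT, ← sigT, ← sigT, ← key]
      obtain ⟨hs1, hs2, hv⟩ := single_add_single_eq (sigC_ne_zero hX₁ne)
        (sigC_ne_zero hX₂ne) (sigC_ne_zero hα) hkey'
      refine ⟨α - X₂, g'', β'', m' * mc, e * cc, bc * b', hg''G, ?_, ?_, ?_, hecc, ?_, hMlt,
        γ, hγH, m' * mc', e * cc', bc' * b', by rw [← hX₂def]⟩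
      · rw [barMap_sub, hX₂def, barMap_scaleLR, hHsyz γ hγH, mul_zero, zero_mul, sub_zero]
      · -- sigMd (α - X₂) = sigMd α
        have hbound : ∀ x ∈ (α - X₂).support, x ≤ sigMd α := by
          intro x hx
          rcases Finset.mem_union.1 (Finsupp.support_sub hx) with h' | h'
          · exact supp_le_of_max_le (le_of_eq (coe_sigMd hα).symm) h'
          · refine supp_le_of_max_le ?_ h'
            rw [← hs2]
            exact le_of_eq (coe_sigMd hX₂ne).symm
        have happ : (α - X₂) (sigMd α) = sigC (scaleLR (m' * mc) (e * cc) β'' (bc * b')) := by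
          rw [Finsupp.sub_apply]
          have e1 : α (sigMd α) = sigC α := rfl
          have e2 : X₂ (sigMd α) = sigC X₂ := by rw [← hs2]; rfl
          rw [e1, e2, ← hv, add_sub_cancel_right]
        exact topd_eq_of_bound hbound (happ ▸ sigC_ne_zero hX₁ne) default
      · -- α - X₂ ≠ 0
        intro h0
        have happ : (α - X₂) (sigMd α) = sigC (scaleLR (m' * mc) (e * cc) β'' (bc * b')) := by
          rw [Finsupp.sub_apply]
          have e1 : α (sigMd α) = sigC α := rfl
          have e2 : X₂ (sigMd α) = sigC X₂ := by rw [← hs2]; rfl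
          rw [e1, e2, ← hv, add_sub_cancel_right]
        rw [h0] at happ
        exact sigC_ne_zero hX₁ne (by simpa using happ.symm)
      · -- sigT (α - X₂) = sigT (new G-multiple)
        have hbound : ∀ x ∈ (α - X₂).support, x ≤ sigMd α := by
          intro x hx
          rcases Finset.mem_union.1 (Finsupp.support_sub hx) with h' | h'
          · exact supp_le_of_max_le (le_of_eq (coe_sigMd hα).symm) h'
          · refine supp_le_of_max_le ?_ h'
            rw [← hs2]
            exact le_of_eq (coe_sigMd hX₂ne).symm
        have happ : (α - X₂) (sigMd α) = sigC (scaleLR (m' * mc) (e * cc) β'' (bc * b')) := by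
          rw [Finsupp.sub_apply]
          have e1 : α (sigMd α) = sigC α := rfl
          have e2 : X₂ (sigMd α) = sigC X₂ := by rw [← hs2]; rfl
          rw [e1, e2, ← hv, add_sub_cancel_right]
        have hMd : sigMd (α - X₂) = sigMd α :=
          topd_eq_of_bound hbound (happ ▸ sigC_ne_zero hX₁ne) default
        have hC : sigC (α - X₂) = sigC (scaleLR (m' * mc) (e * cc) β'' (bc * b')) := by
          rw [sigC, hMd, happ]
        rw [sigT, hMd, hC, ← hs1, ← sigT]

end CaseIV
set_option linter.unusedSectionVars false
set_option linter.unusedVariables false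

open Finsupp

section MainGB

variable {R : Type} [CommRing R] [IsDomain R] [IsPrincipalIdealRing R] [GCDMonoid R]
variable {k n r : ℕ} [NeZero r]
variable [LinearOrder (MMon k n)] [LinearOrder (ModMon k n r)]

lemma fs_sub_apply {k n : ℕ} (v w : MixedAlg R k n) (x : MMon k n) :
    (v - w).coeff x = v.coeff x - w.coeff x := Finsupp.sub_apply _ _ _

lemma max_lt_of_forall {M : Type*} [LinearOrder M] {v : M →₀ R} {τb : WithBot M}
    (hne : τb ≠ ⊥) (h : ∀ x ∈ v.support, (↑x : WithBot M) < τb) :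
    v.support.max < τb := by
  rcases v.support.eq_empty_or_nonempty with he | hne'
  · rw [he]
    exact lt_of_le_of_ne bot_le (Ne.symm (by simpa using hne))
  · obtain ⟨x, hx⟩ := Finset.max_of_nonempty hne'
    rw [hx]
    exact h x (Finset.mem_of_max hx)

theorem main_GB (hord : IsOrderSetting k n r)
    (F : Fin r → MixedAlg R k n)
    (G : Set (MixedAlg R k n × SigModule R k n r))
    (H : Set (SigModule R k n r))
    (hGI : ∀ p ∈ G, Labeled F p)
    (hHsyz : ∀ γ ∈ H, IsSyzygy F γ)
    (h1 : ∀ p ∈ G, p.1 ≠ 0)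
    (h2 : CompleteSet G)
    (h3 : ∀ (τ : ModMon k n r) (c : R), c ≠ 0 →
        ModReducible (H ∪ {β | ∃ g, (g, β) ∈ G}) (Finsupp.single τ c))
    (h4 : ∀ g₁ β₁ g₂ β₂, (g₁, β₁) ∈ G → (g₂, β₂) ∈ G →
        ∀ m₁ n₁ m₂ n₂, IsAmb g₁ g₂ m₁ n₁ m₂ n₂ → RegAmb β₁ β₂ m₁ n₁ m₂ n₂ →
          CoveredBy G H (ambSIG g₁ g₂ β₁ β₂ m₁ n₁ m₂ n₂) (ambLM g₁ m₁ n₁)) :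
    IsSigGB F G := by
  have Hgen : ∀ s : ModMon k n r, ∀ f α, barMap F α = f → f ≠ 0 → sigMd α = s →
      SigReducible G f α := by
    intro s
    induction s using WellFounded.induction hord.mod_wf with
    | _ s IH =>
    intro f α hbar hf hs
    have hα : α ≠ 0 := fun h0 => hf (by rw [← hbar, h0, barMap_zero])
    have hsc : sigC α ≠ 0 := sigC_ne_zero hα
    have hsbα : sigb α = ((s : ModMon k n r) : WithBot (ModMon k n r)) := by
      rw [sigb_eq_coe hα, hs]
    obtain ⟨δ, hδmem, mδ, cδ, bδ, hcδ, hsigTr⟩ := h3 (sigMd α) (sigC α) hsc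
    rw [sigT_single hsc] at hsigTr
    have hsigT : sigT α = sigT (scaleLR mδ cδ δ bδ) := by rw [sigT]; exact hsigTr
    rcases hδmem with hδH | hδG
    · -- the signature of α is realized by an H-multiple: drop the signature
      have hbar2 : barMap F (α - scaleLR mδ cδ δ bδ) = f := by
        rw [barMap_sub, barMap_scaleLR, hHsyz δ hδH, mul_zero, zero_mul, sub_zero, hbar]
      have hlt : sigb (α - scaleLR mδ cδ δ bδ) < sigb α := sig_sub_lt hα hsigT.symm
      have hne2 : α - scaleLR mδ cδ δ bδ ≠ 0 := fun h0 => hf (by rw [← hbar2, h0, barMap_zero])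
      have hlt' : sigMd (α - scaleLR mδ cδ δ bδ) < s := by
        rw [sigb_eq_coe hne2, hsbα] at hlt
        exact WithBot.coe_lt_coe.1 hlt
      obtain ⟨g₁, β₁, h₁G, m₁, c₁, b₁, hc₁, hLT, hLMlt, hsg⟩ :=
        IH _ hlt' f (α - scaleLR mδ cδ δ bδ) hbar2 hf rfl
      exact ⟨g₁, β₁, h₁G, m₁, c₁, b₁, hc₁, hLT, hLMlt, hsg.trans hlt.le⟩
    · -- the signature of α is realized by a G-multiple
      obtain ⟨g, hgG⟩ := hδG
      -- the set of possible leading monomials of signature-realizing G-multiples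
      set S : Set (MMon k n) := { M | ∃ (α' : SigModule R k n r) (g' : MixedAlg R k n)
        (β' : SigModule R k n r) (m' : MMon k n) (c' : R) (b' : FreeMonoid (Fin n)),
        (g', β') ∈ G ∧ barMap F α' = f ∧ sigMd α' = s ∧ α' ≠ 0 ∧ c' ≠ 0 ∧
        sigT α' = sigT (scaleLR m' c' β' b') ∧ M = m' * LMd g' * ⟨0, b'⟩ } with hSdef
      have hSne : S.Nonempty :=
        ⟨mδ * LMd g * ⟨0, bδ⟩, α, g, δ, mδ, cδ, bδ, hgG, hbar, hs, hα, hcδ, hsigT, rfl⟩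
      obtain ⟨α', g', β', m', c', b', hg'G, hbar', hs', hα', hc', hsigT', hM₀⟩ :=
        hord.mon_wf.min_mem S hSne
      obtain ⟨hg', hβ', hg'bar⟩ := memG_facts hGI h1 hg'G
      -- signature facts for the chosen multiple
      have hscl := sigT_elim hα' hsigT'.symm
      have hsMd : mulLR m' (sigMd β') b' = s := by
        rw [← sigMd_scale hord hc' hβ', hscl.2.1, hs']
      -- the candidate reduction
      have hbar'' : barMap F (α' - scaleLR m' c' β' b') = f - trm m' c' * g' * wrd b' := by
        rw [barMap_sub, barMap_scaleLR, hg'bar, hbar']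
      have hsblt : sigb (α' - scaleLR m' c' β' b') < sigb α' := sig_sub_lt hα' hsigT'.symm
      have hsbα' : sigb α' = ((s : ModMon k n r) : WithBot (ModMon k n r)) := by
        rw [sigb_eq_coe hα', hs']
      by_cases hf' : f - trm m' c' * g' * wrd b' = 0
      · -- f is exactly the multiple
        have hfT : f = trm m' c' * g' * wrd b' := by
          rwa [sub_eq_zero] at hf'
        refine ⟨g', β', hg'G, m', c', b', hc', by rw [← hfT], ?_, ?_⟩
        · rw [hf']
          show (0 : MixedAlg R k n).coeff.support.max < LMb f
          rw [MonoidAlgebra.coeff_zero, Finsupp.support_zero, Finset.max_empty]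
          exact lt_of_le_of_ne bot_le (Ne.symm (LMb_ne_bot.2 hf))
        · rw [sigb_scale hord hc' hβ', hsMd, hsbα]
      · -- reduce f - T by the induction hypothesis
        have hα'' : α' - scaleLR m' c' β' b' ≠ 0 :=
          fun h0 => hf' (by rw [← hbar'', h0, barMap_zero])
        have hlt'' : sigMd (α' - scaleLR m' c' β' b') < s := by
          rw [sigb_eq_coe hα'', hsbα'] at hsblt
          exact WithBot.coe_lt_coe.1 hsblt
        obtain ⟨g₀, β₀, hg₀G, m₀, c₀, b₀, hc₀, hLT₀, hLM₀, hsg₀⟩ :=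
          IH _ hlt'' _ _ hbar'' hf' rfl
        obtain ⟨hg₀, hβ₀, hg₀bar⟩ := memG_facts hGI h1 hg₀G
        have hslt0 : mulLR m₀ (sigMd β₀) b₀ < mulLR m' (sigMd β') b' := by
          have h' := lt_of_le_of_lt hsg₀ hsblt
          rw [sigb_scale hord hc₀ hβ₀, hsbα', ← hsMd] at h'
          exact WithBot.coe_lt_coe.1 h'
        have hLbT : LMb (trm m' c' * g' * wrd b')
            = ((m' * LMd g' * ⟨0, b'⟩ : MMon k n) : WithBot (MMon k n)) :=
          LMb_tgb hord hc' hg'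
        have hLbT' : (trm m' c' * g' * wrd b' : MixedAlg R k n).coeff.support.max
            = ((m' * LMd g' * ⟨0, b'⟩ : MMon k n) : WithBot (MMon k n)) := hLbT
        rcases lt_trichotomy (LMb f)
            ((m' * LMd g' * ⟨0, b'⟩ : MMon k n) : WithBot (MMon k n)) with hcmp | hcmp | hcmp
        · -- LM f < LM T : covered-ambiguity case
          -- leading data of f - T
          have hbnd : ∀ x ∈ (f - trm m' c' * g' * wrd b').coeff.support,
              x ≤ m' * LMd g' * ⟨0, b'⟩ := by
            intro x hx
            rcases Finset.mem_union.1 (Finsupp.support_sub hx) with h' | h'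
            · exact supp_le_of_max_le (le_of_lt hcmp) h'
            · exact supp_le_of_max_le (le_of_eq hLbT) h'
          have happ : ((f - trm m' c' * g' * wrd b' : MixedAlg R k n)).coeff
              (m' * LMd g' * ⟨0, b'⟩) = - (c' * LC g') := by
            rw [fs_sub_apply]
            have e0 : f.coeff (m' * LMd g' * ⟨0, b'⟩) = 0 := by
              apply Finsupp.notMem_support_iff.1
              intro hmem
              exact absurd hcmp (not_lt.2 (Finset.le_max hmem))
            have e1 : (trm m' c' * g' * wrd b' : MixedAlg R k n).coeff (m' * LMd g' * ⟨0, b'⟩)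
                = c' * LC g' := tgb_apply (LMd g')
            rw [e0, e1, zero_sub]
          have hLMf' : LMd (f - trm m' c' * g' * wrd b') = m' * LMd g' * ⟨0, b'⟩ :=
            topd_eq_of_bound hbnd
              (happ ▸ neg_ne_zero.2 (mul_ne_zero hc' (LC_ne_zero hg'))) 1
          have hLCf' : LC (f - trm m' c' * g' * wrd b') = - (c' * LC g') := by
            rw [LC, hLMf', happ]
          obtain ⟨_, hLM2, hLC2⟩ := LTerm_elim hf' hLT₀
          have hMeq : m' * LMd g' * ⟨0, b'⟩ = m₀ * LMd g₀ * ⟨0, b₀⟩ := by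
            rw [← hLMf', ← hLM2, LMd_tgb hord hc₀ hg₀]
          have hcoef0 : c₀ * LC g₀ = - (c' * LC g') := by
            rw [← hLCf', ← hLC2, LC_tgb hord hc₀ hg₀]
          rcases case_iv hord F G H hGI h1 hHsyz h4 hg'G hg₀G hc' hc₀ hMeq hslt0 hcoef0
              hα' hsigT' with ⟨γ, hγH, m₃, c₃, b₃, hc₃, hsigT₃⟩ |
              ⟨α₃, g₃, β₃, m₃, c₃, b₃, hg₃G, hbar₃, hsMd₃, hα₃, hc₃, hsigT₃, hMlt₃, _⟩
          · -- signature drop via H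
            have hbar3 : barMap F (α' - scaleLR m₃ c₃ γ b₃) = f := by
              rw [barMap_sub, barMap_scaleLR, hHsyz γ hγH, mul_zero, zero_mul,
                sub_zero, hbar']
            have hlt3 : sigb (α' - scaleLR m₃ c₃ γ b₃) < sigb α' := sig_sub_lt hα' hsigT₃.symm
            have hne3 : α' - scaleLR m₃ c₃ γ b₃ ≠ 0 :=
              fun h0 => hf (by rw [← hbar3, h0, barMap_zero])
            have hlt3' : sigMd (α' - scaleLR m₃ c₃ γ b₃) < s := by
              rw [sigb_eq_coe hne3, hsbα'] at hlt3
              exact WithBot.coe_lt_coe.1 hlt3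
            obtain ⟨g₁, β₁, h₁G, m₁, c₁, b₁, hc₁, hLT, hLMlt, hsg⟩ :=
              IH _ hlt3' f (α' - scaleLR m₃ c₃ γ b₃) hbar3 hf rfl
            refine ⟨g₁, β₁, h₁G, m₁, c₁, b₁, hc₁, hLT, hLMlt, ?_⟩
            refine hsg.trans (le_trans hlt3.le ?_)
            rw [hsbα', hsbα]
          · -- contradiction with the minimality of M₀
            exfalso
            have hmem : (m₃ * LMd g₃ * ⟨0, b₃⟩ : MMon k n) ∈ S :=
              ⟨α₃, g₃, β₃, m₃, c₃, b₃, hg₃G, hbar₃.trans hbar', hsMd₃.trans hs', hα₃,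
                hc₃, hsigT₃, rfl⟩
            exact hord.mon_wf.not_lt_min S hmem (hM₀ ▸ hMlt₃)
        · -- LM f = LM T
          have hLMf : LMd f = m' * LMd g' * ⟨0, b'⟩ := by
            have := (coe_LMd hf).trans (hcmp.trans rfl)
            exact WithBot.coe_inj.1 this
          by_cases hcoefeq : LC f = c' * LC g'
          · -- exact reduction by T
            have hLTf : LTerm (trm m' c' * g' * wrd b') = LTerm f := by
              rw [LTerm_tgb hord hc' hg', LTerm, hLMf, hcoefeq]
            refine ⟨g', β', hg'G, m', c', b', hc', hLTf, LTerm_sub_lt hf hLTf, ?_⟩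
            rw [sigb_scale hord hc' hβ', hsMd, hsbα]
          · -- G-polynomial case
            have hbnd : ∀ x ∈ (f - trm m' c' * g' * wrd b').coeff.support,
                x ≤ m' * LMd g' * ⟨0, b'⟩ := by
              intro x hx
              rcases Finset.mem_union.1 (Finsupp.support_sub hx) with h' | h'
              · exact supp_le_of_max_le (le_of_eq hcmp) h'
              · exact supp_le_of_max_le (le_of_eq hLbT) h'
            have happ : ((f - trm m' c' * g' * wrd b' : MixedAlg R k n)).coeff
                (m' * LMd g' * ⟨0, b'⟩) = LC f - c' * LC g' := by
              rw [fs_sub_apply]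
              have e0 : f.coeff (m' * LMd g' * ⟨0, b'⟩) = LC f := by rw [← hLMf]; rfl
              have e1 : (trm m' c' * g' * wrd b' : MixedAlg R k n).coeff (m' * LMd g' * ⟨0, b'⟩)
                  = c' * LC g' := tgb_apply (LMd g')
              rw [e0, e1]
            have hne0 : LC f - c' * LC g' ≠ 0 := sub_ne_zero.2 hcoefeq
            have hLMf' : LMd (f - trm m' c' * g' * wrd b') = m' * LMd g' * ⟨0, b'⟩ :=
              topd_eq_of_bound hbnd (happ ▸ hne0) 1
            have hLCf' : LC (f - trm m' c' * g' * wrd b') = LC f - c' * LC g' := by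
              rw [LC, hLMf', happ]
            obtain ⟨_, hLM2, hLC2⟩ := LTerm_elim hf' hLT₀
            have hMeq : m' * LMd g' * ⟨0, b'⟩ = m₀ * LMd g₀ * ⟨0, b₀⟩ := by
              rw [← hLMf', ← hLM2, LMd_tgb hord hc₀ hg₀]
            have hcoef0 : c₀ * LC g₀ = LC f - c' * LC g' := by
              rw [← hLCf', ← hLC2, LC_tgb hord hc₀ hg₀]
            have hLCf : LC f = c' * LC g' + c₀ * LC g₀ := by
              rw [hcoef0]
              ring
            refine case_iii hord F G hGI h1 h2 hg'G hg₀G hc' hc₀ hMeq hslt0 hf hLMf hLCf ?_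
            rw [hsMd, hsbα]
        · -- LM f > LM T : the leading term of f survives in f - T
          have hLMbf' : LMb (f - trm m' c' * g' * wrd b') = LMb f := by
            have hbnd : ∀ x ∈ (f - trm m' c' * g' * wrd b').coeff.support, x ≤ LMd f := by
              intro x hx
              rcases Finset.mem_union.1 (Finsupp.support_sub hx) with h' | h'
              · exact supp_le_of_max_le (le_of_eq (coe_LMd hf).symm) h'
              · refine supp_le_of_max_le ?_ h'
                refine (le_of_eq hLbT').trans ?_
                rw [coe_LMd hf]
                exact hcmp.le
            have happ : ((f - trm m' c' * g' * wrd b' : MixedAlg R k n)).coeff (LMd f) = LC f := by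
              rw [fs_sub_apply]
              have e0 : (trm m' c' * g' * wrd b' : MixedAlg R k n).coeff (LMd f) = 0 := by
                apply Finsupp.notMem_support_iff.1
                intro hmem
                have := Finset.le_max hmem
                rw [hLbT'] at this
                exact absurd (this.trans_lt hcmp) (by rw [coe_LMd hf]; exact lt_irrefl _)
              rw [e0, sub_zero]
              rfl
            rw [← coe_LMd hf]
            exact max_eq_of_bound hbnd (happ ▸ LC_ne_zero hf)
          have hLTf' : LTerm (f - trm m' c' * g' * wrd b') = LTerm f := by
            have hLMd : LMd (f - trm m' c' * g' * wrd b') = LMd f := by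
              have hmax : (f - trm m' c' * g' * wrd b').coeff.support.max = f.coeff.support.max := hLMbf'
              rw [LMd_def, LMd_def, hmax]
            have hLC : LC (f - trm m' c' * g' * wrd b') = LC f := by
              rw [LC, hLMd, fs_sub_apply]
              have e0 : (trm m' c' * g' * wrd b' : MixedAlg R k n).coeff (LMd f) = 0 := by
                apply Finsupp.notMem_support_iff.1
                intro hmem
                have := Finset.le_max hmem
                rw [hLbT'] at this
                exact absurd (this.trans_lt hcmp) (by rw [coe_LMd hf]; exact lt_irrefl _)
              rw [e0, sub_zero]
              rfl
            rw [LTerm, LTerm, hLMd, hLC]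
          refine ⟨g₀, β₀, hg₀G, m₀, c₀, b₀, hc₀, hLT₀.trans hLTf', ?_, ?_⟩
          · -- LMb (f - T₀) < LMb f
            have hdecomp : f - trm m₀ c₀ * g₀ * wrd b₀ =
                (f - trm m' c' * g' * wrd b' - trm m₀ c₀ * g₀ * wrd b₀) +
                  trm m' c' * g' * wrd b' := by abel
            rw [hdecomp]
            apply max_lt_of_forall (LMb_ne_bot.2 hf)
            intro x hx
            rcases Finset.mem_union.1 (Finsupp.support_add hx) with h' | h'
            · calc ((x : WithBot (MMon k n)))
                  ≤ (f - trm m' c' * g' * wrd b' - trm m₀ c₀ * g₀ * wrd b₀).coeff.support.max :=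
                    Finset.le_max h'
                _ < LMb (f - trm m' c' * g' * wrd b') := hLM₀
                _ = LMb f := hLMbf'
            · calc ((x : WithBot (MMon k n)))
                  ≤ (trm m' c' * g' * wrd b' : MixedAlg R k n).coeff.support.max := Finset.le_max h'
                _ = ((m' * LMd g' * ⟨0, b'⟩ : MMon k n) : WithBot (MMon k n)) := hLbT
                _ < LMb f := hcmp
          · refine hsg₀.trans (le_trans hsblt.le ?_)
            rw [hsbα', hsbα]
  intro f α hbar hf
  exact Hgen (sigMd α) f α hbar hf rfl

end MainGB
set_option linter.unusedSectionVars false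
set_option linter.unusedVariables false

open Finsupp

section MainSY

variable {R : Type} [CommRing R] [IsDomain R] [IsPrincipalIdealRing R] [GCDMonoid R]
variable {k n r : ℕ} [NeZero r]
variable [LinearOrder (MMon k n)] [LinearOrder (ModMon k n r)]

lemma modmon_lcm {σ₃ σ₄ s : ModMon k n r} {m₃ m₄ : MMon k n} {b₃ b₄ : FreeMonoid (Fin n)}
    (h₃ : mulLR m₃ σ₃ b₃ = s) (h₄ : mulLR m₄ σ₄ b₄ = s) :
    ∃ τ : ModMon k n r, MonLcm σ₃ σ₄ τ ∧
      (∃ (p : MMon k n) (q : FreeMonoid (Fin n)), mulLR p σ₃ q = τ) ∧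
      (∃ (p : MMon k n) (q : FreeMonoid (Fin n)), mulLR p σ₄ q = τ) ∧
      (∃ (p : MMon k n) (q : FreeMonoid (Fin n)), mulLR p τ q = s) := by
  obtain ⟨hu₃, ha₃, hi₃, hb₃⟩ : m₃.c + σ₃.u = s.u ∧ m₃.w * σ₃.a = s.a ∧ σ₃.i = s.i ∧
      σ₃.b * b₃ = s.b := by
    rw [← h₃]; exact ⟨rfl, rfl, rfl, rfl⟩
  obtain ⟨hu₄, ha₄, hi₄, hb₄⟩ : m₄.c + σ₄.u = s.u ∧ m₄.w * σ₄.a = s.a ∧ σ₄.i = s.i ∧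
      σ₄.b * b₄ = s.b := by
    rw [← h₄]; exact ⟨rfl, rfl, rfl, rfl⟩
  obtain ⟨A, ta₃, ta₄, la, hA₃, hA₄, hsA, hMonA⟩ :
      ∃ (A ta₃ ta₄ la : FreeMonoid (Fin n)), A = ta₃ * σ₃.a ∧ A = ta₄ * σ₄.a ∧
        s.a = la * A ∧ ((A = σ₃.a ∧ ∃ t, σ₃.a = t * σ₄.a) ∨
          (A = σ₄.a ∧ ∃ t, σ₄.a = t * σ₃.a)) := by
    rcases fm_suffix_comparable ha₃.symm ha₄.symm with ⟨t, ht⟩ | ⟨t, ht⟩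
    · exact ⟨σ₃.a, 1, t, m₃.w, (one_mul _).symm, ht, ha₃.symm, Or.inl ⟨rfl, t, ht⟩⟩
    · exact ⟨σ₄.a, t, 1, m₄.w, ht, (one_mul _).symm, ha₄.symm, Or.inr ⟨rfl, t, ht⟩⟩
  obtain ⟨B, tb₃, tb₄, rb, hB₃, hB₄, hsB, hMonB⟩ :
      ∃ (B tb₃ tb₄ rb : FreeMonoid (Fin n)), B = σ₃.b * tb₃ ∧ B = σ₄.b * tb₄ ∧
        s.b = B * rb ∧ ((B = σ₃.b ∧ ∃ t, σ₃.b = σ₄.b * t) ∨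
          (B = σ₄.b ∧ ∃ t, σ₄.b = σ₃.b * t)) := by
    rcases fm_prefix_comparable hb₃.symm hb₄.symm with ⟨t, ht⟩ | ⟨t, ht⟩
    · exact ⟨σ₃.b, 1, t, b₃, (mul_one _).symm, ht, hb₃.symm, Or.inl ⟨rfl, t, ht⟩⟩
    · exact ⟨σ₄.b, t, 1, b₄, ht, (mul_one _).symm, hb₄.symm, Or.inr ⟨rfl, t, ht⟩⟩
  have hu₃' : σ₃.u ≤ s.u := hu₃ ▸ le_add_self
  have hu₄' : σ₄.u ≤ s.u := hu₄ ▸ le_add_self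
  refine ⟨⟨σ₃.u ⊔ σ₄.u, A, σ₃.i, B⟩, ?_, ?_, ?_, ?_⟩
  · exact ⟨hi₃.trans hi₄.symm, rfl, rfl,
      (by rcases hMonA with ⟨h1, h2⟩ | ⟨h1, h2⟩ <;> [exact Or.inl ⟨h1, h2⟩;
        exact Or.inr ⟨h1, h2⟩]),
      (by rcases hMonB with ⟨h1, h2⟩ | ⟨h1, h2⟩ <;> [exact Or.inl ⟨h1, h2⟩;
        exact Or.inr ⟨h1, h2⟩])⟩
  · refine ⟨⟨σ₃.u ⊔ σ₄.u - σ₃.u, ta₃⟩, tb₃, ModMon.ext ?_ hA₃.symm rfl hB₃.symm⟩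
    exact tsub_add_cancel_of_le le_sup_left
  · refine ⟨⟨σ₃.u ⊔ σ₄.u - σ₄.u, ta₄⟩, tb₄,
      ModMon.ext ?_ hA₄.symm (hi₄.trans hi₃.symm) hB₄.symm⟩
    exact tsub_add_cancel_of_le le_sup_right
  · refine ⟨⟨s.u - (σ₃.u ⊔ σ₄.u), la⟩, rb, ModMon.ext ?_ hsA.symm hi₃ hsB.symm⟩
    exact tsub_add_cancel_of_le (sup_le hu₃' hu₄')

theorem main_SY (hord : IsOrderSetting k n r)
    (F : Fin r → MixedAlg R k n)
    (G : Set (MixedAlg R k n × SigModule R k n r))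
    (H : Set (SigModule R k n r))
    (hGI : ∀ p ∈ G, Labeled F p)
    (hHsyz : ∀ γ ∈ H, IsSyzygy F γ)
    (h1 : ∀ p ∈ G, p.1 ≠ 0)
    (h2' : SigCompleteSet H)
    (h3 : ∀ (τ : ModMon k n r) (c : R), c ≠ 0 →
        ModReducible (H ∪ {β | ∃ g, (g, β) ∈ G}) (Finsupp.single τ c))
    (h4 : ∀ g₁ β₁ g₂ β₂, (g₁, β₁) ∈ G → (g₂, β₂) ∈ G →
        ∀ m₁ n₁ m₂ n₂, IsAmb g₁ g₂ m₁ n₁ m₂ n₂ → RegAmb β₁ β₂ m₁ n₁ m₂ n₂ →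
          CoveredBy G H (ambSIG g₁ g₂ β₁ β₂ m₁ n₁ m₂ n₂) (ambLM g₁ m₁ n₁))
    (hGB : IsSigGB F G) :
    IsSyzBasis F H := by
  have key : ∀ M : MMon k n, ∀ (γ : SigModule R k n r) (g : MixedAlg R k n)
      (β : SigModule R k n r) (m : MMon k n) (c : R) (b : FreeMonoid (Fin n)),
      (g, β) ∈ G → IsSyzygy F γ → c ≠ 0 → sigT γ = sigT (scaleLR m c β b) →
      M = m * LMd g * ⟨0, b⟩ → ModReducible H γ := by
    intro M
    induction M using WellFounded.induction hord.mon_wf with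
    | _ M IH =>
    intro γ g β m c b hgG hsyz hc hsigT hM
    obtain ⟨hg, hβ, hgbar⟩ := memG_facts hGI h1 hgG
    have hγ : γ ≠ 0 := by
      intro h0
      rw [h0, sigT_zero] at hsigT
      exact sigT_ne_zero (scale_ne_zero hord hc hβ) hsigT.symm
    -- reduce the nonzero polynomial -(t g b) labeled by γ - tβb
    have hbar' : barMap F (γ - scaleLR m c β b) = - (trm m c * g * wrd b) := by
      rw [barMap_sub, barMap_scaleLR, hgbar, hsyz, zero_sub]
    have hne : - (trm m c * g * wrd b) ≠ 0 := neg_ne_zero.2 (tgb_ne_zero hord hc hg)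
    have hsblt : sigb (γ - scaleLR m c β b) < sigb γ := sig_sub_lt hγ hsigT.symm
    obtain ⟨g₀, β₀, hg₀G, m₀, c₀, b₀, hc₀, hLT₀, hLM₀, hsg₀⟩ :=
      hGB (- (trm m c * g * wrd b)) (γ - scaleLR m c β b) hbar' hne
    obtain ⟨hg₀, hβ₀, hg₀bar⟩ := memG_facts hGI h1 hg₀G
    -- decompose the leading-term equality
    have hLTn : LTerm (- (trm m c * g * wrd b) : MixedAlg R k n)
        = trm (m * LMd g * ⟨0, b⟩) (- (c * LC g)) := by
      rw [LTerm_neg, LMd_tgb hord hc hg, LC_tgb hord hc hg]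
    have hLT₀' : trm (m₀ * LMd g₀ * ⟨0, b₀⟩) (c₀ * LC g₀)
        = trm (m * LMd g * ⟨0, b⟩) (- (c * LC g)) := by
      rw [← LTerm_tgb hord hc₀ hg₀, hLT₀, hLTn]
    rcases MonoidAlgebra.single_inj.1 hLT₀' with ⟨hL2, hC2⟩ | ⟨h0, _⟩
    swap
    · exact absurd h0 (mul_ne_zero hc₀ (LC_ne_zero hg₀))
    have hMeq : m * LMd g * ⟨0, b⟩ = m₀ * LMd g₀ * ⟨0, b₀⟩ := hL2.symm
    -- signature comparison
    have hsMdγ : sigMd γ = mulLR m (sigMd β) b := by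
      rw [← (sigT_elim hγ hsigT.symm).2.1, sigMd_scale hord hc hβ]
    have hslt0 : mulLR m₀ (sigMd β₀) b₀ < mulLR m (sigMd β) b := by
      have h' := lt_of_le_of_lt hsg₀ hsblt
      rw [sigb_scale hord hc₀ hβ₀, sigb_eq_coe hγ, hsMdγ] at h'
      exact WithBot.coe_lt_coe.1 h'
    rcases case_iv hord F G H hGI h1 hHsyz h4 hgG hg₀G hc hc₀ hMeq hslt0 hC2 hγ hsigT with
      ⟨γ'', hγ''H, m₃, c₃, b₃, hc₃, hsig₃⟩ |
      ⟨γ₃, g₃, β₃, m₃, c₃, b₃, hg₃G, hbar₃, hsMd₃, hγ₃, hc₃, hsigT₃, hMlt₃,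
        γH, hγHH, mH, cH, bH, hdecomp⟩
    · exact ⟨γ'', hγ''H, m₃, c₃, b₃, hc₃, hsig₃⟩
    · -- recurse on the smaller leading monomial
      have hsyz₃ : IsSyzygy F γ₃ := by
        rw [IsSyzygy, hbar₃, hsyz]
      obtain ⟨γ₄, hγ₄H, m₄, c₄, b₄, hc₄, hsig₄⟩ :=
        IH (m₃ * LMd g₃ * ⟨0, b₃⟩) (hM ▸ hMlt₃) γ₃ g₃ β₃ m₃ c₃ b₃ hg₃G hsyz₃ hc₃ hsigT₃ rfl
      -- data for the H-multiple X₂ := γ - γ₃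
      by_cases hX₂0 : scaleLR mH cH γH bH = 0
      · -- γ₃ = γ,直接
        rw [hX₂0, sub_zero] at hdecomp
        exact ⟨γ₄, hγ₄H, m₄, c₄, b₄, hc₄, by rw [hdecomp] at hsig₄; exact hsig₄⟩
      -- both γ₄ and γH divide the signature of γ; recombine via sig-completeness
      have hγ₄ : γ₄ ≠ 0 := by
        intro h0
        rw [h0, scaleLR_zero, sigT_zero] at hsig₄
        exact sigT_ne_zero hγ₃ hsig₄
      have hγH0 : γH ≠ 0 := scaleLR_ne_zero_arg hX₂0
      have hcH : cH ≠ 0 := scaleLR_ne_zero_coeff hX₂0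
      -- the top coefficient decomposition
      have hsgood := sigT_elim hγ₃ hsig₄.symm
      have hm₄div : mulLR m₄ (sigMd γ₄) b₄ = sigMd γ := by
        rw [← sigMd_scale hord hc₄ hγ₄, hsgood.2.1, hsMd₃]
      have hv₁ : c₄ * sigC γ₄ = sigC γ₃ := by
        rw [← sigC_scale hord hc₄ hγ₄, hsgood.2.2]
      by_cases hv₂0 : sigC γ - sigC γ₃ = 0
      · -- the H-part does not contribute to the top coefficient: γ₄ alone reduces γ
        refine ⟨γ₄, hγ₄H, m₄, c₄, b₄, hc₄, ?_⟩
        rw [← hsig₄, sigT, sigT, hsMd₃, sub_eq_zero.1 hv₂0]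
      · -- the H-part contributes; X₂ has signature monomial sigMd γ
        have hX₂eq : scaleLR mH cH γH bH = γ - γ₃ := by
          rw [hdecomp]
          abel
        have hbndX : ∀ x ∈ (γ - γ₃).support, x ≤ sigMd γ := by
          intro x hx
          rcases Finset.mem_union.1 (Finsupp.support_sub hx) with h' | h'
          · exact supp_le_of_max_le (le_of_eq (coe_sigMd hγ).symm) h'
          · refine supp_le_of_max_le ?_ h'
            rw [← hsMd₃]
            exact le_of_eq (coe_sigMd hγ₃).symm
        have happX : (γ - γ₃) (sigMd γ) = sigC γ - sigC γ₃ := by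
          rw [Finsupp.sub_apply]
          have e1 : γ (sigMd γ) = sigC γ := rfl
          have e2 : γ₃ (sigMd γ) = sigC γ₃ := by rw [sigC, hsMd₃]
          rw [e1, e2]
        have hMdX : sigMd (γ - γ₃) = sigMd γ :=
          topd_eq_of_bound hbndX (happX ▸ hv₂0) default
        have hmHdiv : mulLR mH (sigMd γH) bH = sigMd γ := by
          rw [← sigMd_scale hord hcH hγH0, hX₂eq, hMdX]
        have hs2 : sigC (γ - γ₃) = cH * sigC γH := by
          rw [← hX₂eq]
          exact sigC_scale hord hcH hγH0
        have hv₂ : cH * sigC γH = sigC γ - sigC γ₃ := by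
          rw [← hs2, sigC, hMdX]
          exact happX
        -- lcm of the two signature divisors
        obtain ⟨τ, hMonLcm, ⟨p₄, q₄, hp₄⟩, ⟨pH, qH, hpH⟩, ⟨pf, qf, hpf⟩⟩ :=
          modmon_lcm hm₄div hmHdiv
        -- Bezout coefficients for the signature coefficients
        obtain ⟨cB, dB, hBez⟩ := exists_gcd_eq_mul_add_mul (sigC γ₄) (sigC γH)
        have hBez' : cB * sigC γ₄ + dB * sigC γH = gcd (sigC γ₄) (sigC γH) := by
          rw [hBez]; ring
        have hgcdV : gcd (sigC γ₄) (sigC γH) ≠ 0 := gcd_ne_zero' _ (sigC_ne_zero hγ₄)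
        -- sig-Combination
        have hZred : ModReducible H (scaleLR p₄ cB γ₄ q₄ + scaleLR pH dB γH qH) :=
          h2' γ₄ hγ₄H γH hγHH τ hMonLcm p₄ q₄ pH qH hp₄ hpH cB dB hBez'
        have hbndZ : ∀ x ∈ (scaleLR p₄ cB γ₄ q₄ + scaleLR pH dB γH qH : SigModule R k n r).support, x ≤ τ := by
          intro x hx
          rcases Finset.mem_union.1 (Finsupp.support_add hx) with h' | h'
          · rcases eq_or_ne cB 0 with rfl | hcB
            · rw [scaleLR_zero_coeff] at h'
              simp at h'
            · have hh : sigb (scaleLR p₄ cB γ₄ q₄) = ((τ : ModMon k n r) : WithBot (ModMon k n r)) := by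
                rw [sigb_scale hord hcB hγ₄, hp₄]
              exact supp_le_of_max_le (le_of_eq hh) h'
          · rcases eq_or_ne dB 0 with rfl | hdB
            · rw [scaleLR_zero_coeff] at h'
              simp at h'
            · have hh : sigb (scaleLR pH dB γH qH) = ((τ : ModMon k n r) : WithBot (ModMon k n r)) := by
                rw [sigb_scale hord hdB hγH0, hpH]
              exact supp_le_of_max_le (le_of_eq hh) h'
        have happZ : (scaleLR p₄ cB γ₄ q₄ + scaleLR pH dB γH qH : SigModule R k n r) τ = gcd (sigC γ₄) (sigC γH) := by
          rw [Finsupp.add_apply]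
          have e1 : (scaleLR p₄ cB γ₄ q₄ : SigModule R k n r) τ = cB * sigC γ₄ := by
            rw [← hp₄]
            exact scale_apply (sigMd γ₄)
          have e2 : (scaleLR pH dB γH qH : SigModule R k n r) τ = dB * sigC γH := by
            rw [← hpH]
            exact scale_apply (sigMd γH)
          rw [e1, e2, hBez']
        have hZne : (scaleLR p₄ cB γ₄ q₄ + scaleLR pH dB γH qH : SigModule R k n r) ≠ 0 := by
          intro h0
          rw [h0] at happZ
          exact hgcdV (by simpa using happZ.symm)
        have hMdZ : sigMd (scaleLR p₄ cB γ₄ q₄ + scaleLR pH dB γH qH : SigModule R k n r) = τ := topd_eq_of_bound hbndZ (happZ ▸ hgcdV) default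
        have hCZ : sigC (scaleLR p₄ cB γ₄ q₄ + scaleLR pH dB γH qH : SigModule R k n r) = gcd (sigC γ₄) (sigC γH) := by
          rw [sigC, hMdZ, happZ]
        obtain ⟨γ₅, hγ₅H, m₅, c₅, b₅, hc₅, hsig₅⟩ := hZred
        have hγ₅ : γ₅ ≠ 0 := by
          intro h0
          rw [h0, scaleLR_zero, sigT_zero] at hsig₅
          exact sigT_ne_zero hZne hsig₅
        have h5 := sigT_elim hZne hsig₅.symm
        have hm₅ : mulLR m₅ (sigMd γ₅) b₅ = τ := by
          rw [← sigMd_scale hord hc₅ hγ₅, h5.2.1, hMdZ]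
        have hc₅v : c₅ * sigC γ₅ = gcd (sigC γ₄) (sigC γH) := by
          rw [← sigC_scale hord hc₅ hγ₅, h5.2.2, hCZ]
        obtain ⟨wv, hwv⟩ : gcd (sigC γ₄) (sigC γH) ∣ sigC γ := by
          have d1 : gcd (sigC γ₄) (sigC γH) ∣ sigC γ₃ :=
            hv₁ ▸ (gcd_dvd_left _ _).mul_left c₄
          have d2 : gcd (sigC γ₄) (sigC γH) ∣ (sigC γ - sigC γ₃) :=
            hv₂ ▸ (gcd_dvd_right _ _).mul_left cH
          have := dvd_add d1 d2
          rwa [add_sub_cancel] at this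
        have hwv0 : wv ≠ 0 := fun h0 => sigC_ne_zero hγ (by rw [hwv, h0, mul_zero])
        refine ⟨γ₅, hγ₅H, pf * m₅, wv * c₅, b₅ * qf, mul_ne_zero hwv0 hc₅, ?_⟩
        rw [sigT_scale hord (mul_ne_zero hwv0 hc₅) hγ₅, sigT]
        have hmon : mulLR (pf * m₅) (sigMd γ₅) (b₅ * qf) = sigMd γ := by
          rw [← mulLR_comp, hm₅, hpf]
        have hcoe : wv * c₅ * sigC γ₅ = sigC γ := by
          rw [mul_assoc, hc₅v, hwv, mul_comm]
        rw [hmon, hcoe]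
  intro γ hsyz hγ
  obtain ⟨δ, hδmem, mδ, cδ, bδ, hcδ, hsigTr⟩ := h3 (sigMd γ) (sigC γ) (sigC_ne_zero hγ)
  rw [sigT_single (sigC_ne_zero hγ)] at hsigTr
  have hsigT : sigT γ = sigT (scaleLR mδ cδ δ bδ) := by rw [sigT]; exact hsigTr
  rcases hδmem with hδH | ⟨g, hgG⟩
  · exact ⟨δ, hδH, mδ, cδ, bδ, hcδ, hsigT⟩
  · exact key (mδ * LMd g * ⟨0, bδ⟩) γ g δ mδ cδ bδ hgG hsyz hcδ hsigT rfl

end MainSY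

/-- Theorem 5.2: the cover criterion.  If (1) all elements of
`G` have nonzero polynomial part, (2) `G` is complete and `H` is sig-complete,
(3) all module terms are reducible by `H ∪ {β : g^{[β]} ∈ G}`, and (4) all
regular ambiguities of `G` are covered by `(G, H)`, then `G` is a signature
Gröbner basis and `H` is a syzygy basis of `I^{[Σ]}`. -/
theorem cover_criterion
    {R : Type} [CommRing R] [IsDomain R] [IsPrincipalIdealRing R] [GCDMonoid R]
    {k n r : ℕ} [NeZero r]
    [LinearOrder (MMon k n)] [LinearOrder (ModMon k n r)]
    (hord : IsOrderSetting k n r)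
    (F : Fin r → MixedAlg R k n)
    (G : Set (MixedAlg R k n × SigModule R k n r))
    (H : Set (SigModule R k n r))
    (hGI : ∀ p ∈ G, Labeled F p)
    (hHsyz : ∀ γ ∈ H, IsSyzygy F γ)
    (h1 : ∀ p ∈ G, p.1 ≠ 0)
    (h2 : CompleteSet G)
    (h2' : SigCompleteSet H)
    (h3 : ∀ (τ : ModMon k n r) (c : R), c ≠ 0 →
        ModReducible (H ∪ {β | ∃ g, (g, β) ∈ G}) (Finsupp.single τ c))
    (h4 : ∀ g₁ β₁ g₂ β₂, (g₁, β₁) ∈ G → (g₂, β₂) ∈ G →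
        ∀ m₁ n₁ m₂ n₂, IsAmb g₁ g₂ m₁ n₁ m₂ n₂ → RegAmb β₁ β₂ m₁ n₁ m₂ n₂ →
          CoveredBy G H (ambSIG g₁ g₂ β₁ β₂ m₁ n₁ m₂ n₂) (ambLM g₁ m₁ n₁)) :
    IsSigGB F G ∧ IsSyzBasis F H := by
  refine ⟨main_GB hord F G H hGI hHsyz h1 h2 h3 h4, ?_⟩
  exact main_SY hord F G H hGI hHsyz h1 h2' h3 h4 (main_GB hord F G H hGI hHsyz h1 h2 h3 h4)
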